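/- arXiv:2602.10665 — 9 statements merged into one kernel-verified Lean document; each statement's English description precedes it below -/
import Mathlib

section
/- Let n, m ∈ ℕ with 1 ≤ n ≤ m, let Γ ∈ ℝ^{n×m}, and let ρ ≥ 1. Suppose there exists an invertible linear map T : ℝⁿ → ℝⁿ such that T(Γ(B₁^m)) ⊆ B₁ⁿ ⊆ ρ·T(Γ(B₁^m)). Then there exists a matrix A ∈ ℝ^{m×n} such that every column a of A satisfies ‖a‖₁ ≤ 1 and |supp(a)| ≤ n, and Γ(B₁^m) ⊆ ρ·(ΓA)(B₁ⁿ). -/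
open MeasureTheory Matrix
open scoped ENNReal NNReal Pointwise

noncomputable section

/-- The cross-polytope (closed unit ball of `ℓ₁`) in `ℝ^k`. -/
def B1 (k : ℕ) : Set (Fin k → ℝ) := {x | ∑ i, |x i| ≤ 1}

open Classical in
private lemma key_abs (a b t : ℝ) (ht : 0 ≤ t) (h0 : a = 0 → b = 0)
    (hneg : (if 0 ≤ a then b else -b) < 0 → t * |b| ≤ |a|) :
    |a + t * b| ≤ |a| + t * (if 0 ≤ a then b else -b) := by
  rcases lt_trichotomy a 0 with h | h | h
  · rw [if_neg (not_le.mpr h)]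
    have habs : a + t * b ≤ 0 := by
      rcases le_or_gt b 0 with hb | hb
      · nlinarith
      · have := hneg (by rw [if_neg (not_le.mpr h)]; linarith)
        rw [abs_of_pos hb, abs_of_neg h] at this; linarith
    rw [abs_of_nonpos habs, abs_of_neg h]
    linarith
  · simp [h, h0 h]
  · rw [if_pos h.le]
    have habs : 0 ≤ a + t * b := by
      rcases le_or_gt 0 b with hb | hb
      · nlinarith
      · have := hneg (by rw [if_pos h.le]; exact hb)
        rw [abs_of_neg hb, abs_of_pos h] at this; linarith
    rw [abs_of_nonneg habs, abs_of_pos h]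

open Classical in
private lemma sparsify_aux (n m : ℕ) (Γ : Matrix (Fin n) (Fin m) ℝ) :
    ∀ N : ℕ, ∀ x : Fin m → ℝ,
      (Finset.univ.filter (fun j => x j ≠ 0)).card ≤ N → (∑ j, |x j|) ≤ 1 →
    ∃ a : Fin m → ℝ, Γ.mulVec a = Γ.mulVec x ∧ (∑ j, |a j|) ≤ 1 ∧
      (Finset.univ.filter (fun j => a j ≠ 0)).card ≤ n := by
  intro N
  induction N with
  | zero =>
    intro x hc hs
    exact ⟨x, rfl, hs, by omega⟩
  | succ N ih =>
    intro x hc hs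
    set S : Finset (Fin m) := Finset.univ.filter (fun j => x j ≠ 0) with hS
    by_cases hcard : S.card ≤ n
    · exact ⟨x, rfl, hs, hcard⟩
    push_neg at hcard
    -- the columns of Γ indexed by S are linearly dependent
    have hdep : ¬ LinearIndependent ℝ (fun j : S => (fun k => Γ k j.1 : Fin n → ℝ)) := by
      intro hli
      have := hli.fintype_card_le_finrank
      rw [Module.finrank_fintype_fun_eq_card, Fintype.card_coe, Fintype.card_fin] at this
      omega
    obtain ⟨g, hg0, i₀, hgi₀⟩ := Fintype.not_linearIndependent_iff.mp hdep
    -- extend g to Fin m and normalize its "signed sum" to be nonpositive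
    set μ₀ : Fin m → ℝ := fun j => if h : j ∈ S then g ⟨j, h⟩ else 0 with hμ₀
    have hμ₀supp : ∀ j, x j = 0 → μ₀ j = 0 := by
      intro j hj
      have : j ∉ S := by simp [hS, hj]
      simp [hμ₀, this]
    have hμ₀mul : Γ.mulVec μ₀ = 0 := by
      funext k
      have h1 : ∑ i : S, g i • (fun k => Γ k i.1 : Fin n → ℝ) = 0 := hg0
      have h2 := congrFun h1 k
      simp only [Finset.sum_apply, Pi.smul_apply, smul_eq_mul, Pi.zero_apply] at h2
      have h3 : ∑ j : Fin m, Γ k j * μ₀ j = ∑ j ∈ S, Γ k j * μ₀ j := by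
        refine (Finset.sum_subset (Finset.subset_univ S) ?_).symm
        intro j _ hj
        simp [hμ₀, hj]
      rw [Matrix.mulVec, Pi.zero_apply]
      show ∑ j : Fin m, Γ k j * μ₀ j = 0
      rw [h3, ← Finset.sum_coe_sort S (fun j => Γ k j * μ₀ j)]
      calc (∑ i : S, Γ k i.1 * μ₀ i.1) = ∑ i : S, g i * Γ k i.1 := by
            refine Finset.sum_congr rfl fun i _ => ?_
            simp [hμ₀, i.2, mul_comm]
        _ = 0 := h2
    have hμ₀ne : μ₀ i₀.1 ≠ 0 := by simpa [hμ₀, i₀.2] using hgi₀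
    have hμex : ∃ μ : Fin m → ℝ, (∀ j, x j = 0 → μ j = 0) ∧ Γ.mulVec μ = 0 ∧
        μ i₀.1 ≠ 0 ∧ (∑ j, (if 0 ≤ x j then μ j else -μ j)) ≤ 0 := by
      rcases le_or_gt (∑ j, (if 0 ≤ x j then μ₀ j else -μ₀ j)) 0 with h | h
      · exact ⟨μ₀, hμ₀supp, hμ₀mul, hμ₀ne, h⟩
      · refine ⟨-μ₀, fun j hj => by simp [hμ₀supp j hj], ?_, by simpa using hμ₀ne, ?_⟩
        · rw [Matrix.mulVec_neg, hμ₀mul, neg_zero]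
        · have heq : (∑ j, (if 0 ≤ x j then (-μ₀) j else -(-μ₀) j)) =
              -(∑ j, (if 0 ≤ x j then μ₀ j else -μ₀ j)) := by
            rw [← Finset.sum_neg_distrib]
            refine Finset.sum_congr rfl fun j _ => ?_
            by_cases hx : 0 ≤ x j <;> simp [hx]
          rw [heq]; linarith
    obtain ⟨μ, hμsupp, hμmul, hμne, hwsum0⟩ := hμex
    set w : Fin m → ℝ := fun j => if 0 ≤ x j then μ j else -μ j with hw
    have hwsum : ∑ j, w j ≤ 0 := hwsum0
    -- the set of indices where the signed direction decreases |x j|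
    have hJne : (Finset.univ.filter (fun j => w j < 0)).Nonempty := by
      by_contra hJ
      rw [Finset.not_nonempty_iff_eq_empty, Finset.filter_eq_empty_iff] at hJ
      have hwnn : ∀ j ∈ Finset.univ, (0:ℝ) ≤ w j := by
        intro j _; exact not_lt.mp (hJ (Finset.mem_univ j))
      have hall := (Finset.sum_eq_zero_iff_of_nonneg hwnn).mp
        (le_antisymm hwsum (Finset.sum_nonneg hwnn))
      have : w i₀.1 = 0 := hall i₀.1 (Finset.mem_univ _)
      rw [hw] at this
      by_cases hx : 0 ≤ x i₀.1 <;> simp [hx] at this <;> exact hμne this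
    obtain ⟨j₀, hj₀mem, hj₀min⟩ :=
      Finset.exists_min_image _ (fun j => |x j| / |μ j|) hJne
    rw [Finset.mem_filter] at hj₀mem
    have hwj₀ : w j₀ < 0 := hj₀mem.2
    have hμj₀ : μ j₀ ≠ 0 := by
      intro h; rw [hw] at hwj₀; by_cases hx : 0 ≤ x j₀ <;> simp [hx, h] at hwj₀
    have hxj₀ : x j₀ ≠ 0 := fun h => hμj₀ (hμsupp j₀ h)
    set t : ℝ := |x j₀| / |μ j₀| with htdef
    have ht0 : 0 < t := div_pos (abs_pos.mpr hxj₀) (abs_pos.mpr hμj₀)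
    set x' : Fin m → ℝ := fun j => x j + t * μ j with hx'
    -- pointwise bound
    have hpt : ∀ j, |x' j| ≤ |x j| + t * w j := by
      intro j
      refine key_abs (x j) (μ j) t ht0.le (hμsupp j) ?_
      intro hwj
      have hj_mem : j ∈ Finset.univ.filter (fun j => w j < 0) := by
        simp only [Finset.mem_filter, Finset.mem_univ, true_and]; rw [hw]; exact hwj
      have hμj : μ j ≠ 0 := by
        intro h; by_cases hx : 0 ≤ x j <;> simp [hx, h] at hwj
      have := hj₀min j hj_mem
      calc t * |μ j| ≤ (|x j| / |μ j|) * |μ j| := by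
            exact mul_le_mul_of_nonneg_right this (abs_nonneg _)
        _ = |x j| := by field_simp
    -- ℓ¹ bound
    have hsum' : (∑ j, |x' j|) ≤ 1 := by
      calc (∑ j, |x' j|) ≤ ∑ j, (|x j| + t * w j) := Finset.sum_le_sum fun j _ => hpt j
        _ = (∑ j, |x j|) + t * ∑ j, w j := by
            rw [Finset.sum_add_distrib, Finset.mul_sum]
        _ ≤ (∑ j, |x j|) + 0 := by
            have : t * ∑ j, w j ≤ 0 := mul_nonpos_of_nonneg_of_nonpos ht0.le hwsum
            linarith
        _ ≤ 1 := by linarith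
    -- the image is unchanged
    have hmul' : Γ.mulVec x' = Γ.mulVec x := by
      have : x' = x + t • μ := by funext j; simp [hx', smul_eq_mul]
      rw [this, Matrix.mulVec_add, Matrix.mulVec_smul, hμmul]
      simp
    -- x' j₀ = 0
    have hx'j₀ : x' j₀ = 0 := by
      have hwj₀' : (if 0 ≤ x j₀ then μ j₀ else -μ j₀) < 0 := hwj₀
      show x j₀ + t * μ j₀ = 0
      rw [htdef]
      by_cases hx : 0 ≤ x j₀
      · rw [if_pos hx] at hwj₀'
        rw [abs_of_nonneg hx, abs_of_neg hwj₀']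
        field_simp [hμj₀]
        ring
      · rw [if_neg hx] at hwj₀'
        push_neg at hx
        have hμpos : 0 < μ j₀ := by linarith
        rw [abs_of_neg hx, abs_of_pos hμpos]
        field_simp [hμj₀]
        ring
    -- support strictly decreases
    have hsubset : (Finset.univ.filter (fun j => x' j ≠ 0)) ⊆ S.erase j₀ := by
      intro j hj
      rw [Finset.mem_filter] at hj
      rw [Finset.mem_erase]
      constructor
      · intro h; exact hj.2 (h ▸ hx'j₀)
      · simp only [hS, Finset.mem_filter, Finset.mem_univ, true_and]
        intro h
        exact hj.2 (by simp [hx', h, hμsupp j h])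
    have hcard' : (Finset.univ.filter (fun j => x' j ≠ 0)).card ≤ N := by
      have h1 := Finset.card_le_card hsubset
      have h2 : (S.erase j₀).card < S.card := by
        refine Finset.card_erase_lt_of_mem ?_
        simp only [hS, Finset.mem_filter, Finset.mem_univ, true_and]
        exact hxj₀
      omega
    obtain ⟨a, ha1, ha2, ha3⟩ := ih x' hcard' hsum'
    exact ⟨a, ha1.trans hmul', ha2, ha3⟩

open Classical in
private lemma sparsify (n m : ℕ) (Γ : Matrix (Fin n) (Fin m) ℝ)
    (x : Fin m → ℝ) (hx : (∑ j, |x j|) ≤ 1) :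
    ∃ a : Fin m → ℝ, Γ.mulVec a = Γ.mulVec x ∧ (∑ j, |a j|) ≤ 1 ∧
      {j | a j ≠ 0}.ncard ≤ n := by
  obtain ⟨a, h1, h2, h3⟩ := sparsify_aux n m Γ
    (Finset.univ.filter (fun j => x j ≠ 0)).card x le_rfl hx
  refine ⟨a, h1, h2, ?_⟩
  have : {j | a j ≠ 0} = ↑(Finset.univ.filter (fun j => a j ≠ 0)) := by
    ext j; simp
  rw [this, Set.ncard_coe_finset]
  exact h3

/-- on the Banach–Mazur event, `G_m = Γ(B₁^m)` admits a sparse coefficient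
matrix `A` with `ℓ₁`-bounded, `n`-sparse columns such that `G_m ⊆ ρ·(ΓA)(B₁ⁿ)`. -/
theorem sparse_coefficient_representation (n m : ℕ) (hn : 1 ≤ n) (hnm : n ≤ m)
    (Γ : Matrix (Fin n) (Fin m) ℝ) (ρ : ℝ) (hρ : 1 ≤ ρ)
    (hT : ∃ T : (Fin n → ℝ) ≃ₗ[ℝ] (Fin n → ℝ),
      T '' (Γ.mulVec '' B1 m) ⊆ B1 n ∧ B1 n ⊆ ρ • (T '' (Γ.mulVec '' B1 m))) :
    ∃ A : Matrix (Fin m) (Fin n) ℝ,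
      (∀ i, (∑ j, |A j i|) ≤ 1 ∧ {j | A j i ≠ 0}.ncard ≤ n) ∧
      Γ.mulVec '' B1 m ⊆ ρ • ((Γ * A).mulVec '' B1 n) := by
  obtain ⟨T, hT1, hT2⟩ := hT
  have hρ0 : (ρ:ℝ) ≠ 0 := by linarith
  -- for each i, the basis vector e_i lies in B1 n
  have he : ∀ i : Fin n, (Pi.single i 1 : Fin n → ℝ) ∈ B1 n := by
    intro i
    simp only [B1, Set.mem_setOf_eq, Pi.single_apply]
    rw [Finset.sum_congr rfl (fun j _ => by
      rw [show |if j = i then (1:ℝ) else 0| = if j = i then 1 else 0 by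
        split <;> simp])]
    simp
  -- pick sparse preimages of ρ⁻¹ • T.symm (e i)
  have hcol : ∀ i : Fin n, ∃ a : Fin m → ℝ,
      Γ.mulVec a = ρ⁻¹ • T.symm (Pi.single i 1) ∧
      (∑ j, |a j|) ≤ 1 ∧ {j | a j ≠ 0}.ncard ≤ n := by
    intro i
    obtain ⟨u, hu, hequ⟩ := hT2 (he i)
    obtain ⟨v, hv, hvu⟩ := hu
    obtain ⟨x, hx, hxv⟩ := hv
    have hΓx : Γ.mulVec x = ρ⁻¹ • T.symm (Pi.single i 1) := by
      have h1 : ρ • T v = Pi.single i 1 := by rw [hvu]; exact hequ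
      have h2 : T (Γ.mulVec x) = ρ⁻¹ • (Pi.single i 1 : Fin n → ℝ) := by
        rw [hxv, ← h1, smul_smul, inv_mul_cancel₀ hρ0, one_smul]
      calc Γ.mulVec x = T.symm (T (Γ.mulVec x)) := (T.symm_apply_apply _).symm
        _ = T.symm (ρ⁻¹ • (Pi.single i 1 : Fin n → ℝ)) := by rw [h2]
        _ = ρ⁻¹ • T.symm (Pi.single i 1) := _root_.map_smul _ _ _
    obtain ⟨a, ha1, ha2, ha3⟩ := sparsify n m Γ x hx
    exact ⟨a, ha1.trans hΓx, ha2, ha3⟩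
  choose a ha1 ha2 ha3 using hcol
  refine ⟨Matrix.of (fun j i => a i j), fun i => ⟨ha2 i, ha3 i⟩, ?_⟩
  -- the key identity: (Γ * A).mulVec z = ρ⁻¹ • T.symm z
  have hkey : ∀ z : Fin n → ℝ,
      (Γ * Matrix.of (fun j i => a i j)).mulVec z = ρ⁻¹ • T.symm z := by
    intro z
    rw [← Matrix.mulVec_mulVec]
    have hAz : (Matrix.of (fun j i => a i j)).mulVec z = ∑ i, z i • a i := by
      funext j
      simp [Matrix.mulVec, dotProduct, Finset.sum_apply, mul_comm]
    rw [hAz]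
    have : Γ.mulVec (∑ i, z i • a i) = ∑ i, z i • Γ.mulVec (a i) := by
      rw [show Γ.mulVec (∑ i, z i • a i) = Γ.mulVecLin (∑ i, z i • a i) from rfl]
      rw [map_sum]
      exact Finset.sum_congr rfl fun i _ => by rw [LinearMap.map_smul]; rfl
    rw [this]
    have hz : z = ∑ i, z i • (Pi.single i 1 : Fin n → ℝ) := by
      funext k
      simp [Pi.single_apply, Finset.sum_apply, mul_comm]
    calc ∑ i, z i • Γ.mulVec (a i)
        = ∑ i, z i • (ρ⁻¹ • T.symm (Pi.single i 1)) := by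
          exact Finset.sum_congr rfl fun i _ => by rw [ha1 i]
      _ = ρ⁻¹ • ∑ i, z i • T.symm (Pi.single i 1) := by
          rw [Finset.smul_sum]
          exact Finset.sum_congr rfl fun i _ => smul_comm _ _ _
      _ = ρ⁻¹ • T.symm z := by
          congr 1
          rw [show (∑ i, z i • T.symm (Pi.single i 1)) =
            T.symm (∑ i, z i • (Pi.single i 1 : Fin n → ℝ)) by
              rw [map_sum]; exact Finset.sum_congr rfl fun i _ => (_root_.map_smul _ _ _).symm]
          rw [← hz]
  intro y hy
  have hTy : T y ∈ B1 n := hT1 (Set.mem_image_of_mem T hy)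
  refine Set.mem_smul_set.mpr
    ⟨(Γ * Matrix.of (fun j i => a i j)).mulVec (T y), ⟨T y, hTy, rfl⟩, ?_⟩
  rw [hkey (T y), smul_smul, mul_inv_cancel₀ hρ0, one_smul, T.symm_apply_apply]
end
end

section
/- Let n ≥ 2 and m be integers with n ≤ m, let ρ ≥ 1, and let ε ∈ (0,1] satisfy ε·ρ·n² ≤ 1. Let Γ ∈ ℝ^{n×m} and suppose there exists an invertible linear map T : ℝⁿ → ℝⁿ with T(Γ(B₁^m)) ⊆ B₁ⁿ ⊆ ρ·T(Γ(B₁^m)). Then there exists A ∈ A_{m,n}(ε) such that Γ(B₁^m) ⊆ 2ρ·(ΓA)(B₁ⁿ). -/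
open MeasureTheory Matrix
open scoped ENNReal NNReal Pointwise

noncomputable section

/-- The class of coefficient matrices: every column has `ℓ₁`-norm at most 1 and
support of size at most `n`. -/
def Amn (m n : ℕ) : Set (Matrix (Fin m) (Fin n) ℝ) :=
  {A | ∀ i, (∑ j, |A j i|) ≤ 1 ∧ {j | A j i ≠ 0}.ncard ≤ n}

/-- The discretized class: members of `Amn m n` whose entries all lie in `ε·ℤ`. -/
def AmnEps (m n : ℕ) (ε : ℝ) : Set (Matrix (Fin m) (Fin n) ℝ) :=
  {A | A ∈ Amn m n ∧ ∀ j i, ∃ z : ℤ, A j i = ε * z}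

/- ## Auxiliary material -/

open scoped Classical

private def l1 {k : ℕ} (x : Fin k → ℝ) : ℝ := ∑ i, |x i|

private lemma l1_nonneg {k : ℕ} (x : Fin k → ℝ) : 0 ≤ l1 x :=
  Finset.sum_nonneg fun _ _ => abs_nonneg _

private lemma eq_zero_of_l1 {k : ℕ} {x : Fin k → ℝ} (h : l1 x ≤ 0) : x = 0 := by
  have h0 : l1 x = 0 := le_antisymm h (l1_nonneg x)
  funext i
  have := (Finset.sum_eq_zero_iff_of_nonneg (fun i _ => abs_nonneg (x i))).1 h0 i
    (Finset.mem_univ i)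
  simpa [abs_eq_zero] using this

private lemma l1_smul {k : ℕ} (c : ℝ) (x : Fin k → ℝ) : l1 (c • x) = |c| * l1 x := by
  simp [l1, abs_mul, Finset.mul_sum]

private lemma l1_sum_le {k : ℕ} {ι : Type*} (s : Finset ι) (f : ι → (Fin k → ℝ)) :
    l1 (∑ j ∈ s, f j) ≤ ∑ j ∈ s, l1 (f j) := by
  unfold l1
  rw [Finset.sum_comm]
  refine Finset.sum_le_sum fun i _ => ?_
  simpa using Finset.abs_sum_le_sum_abs (fun j => f j i) s

private lemma l1_add_le {k : ℕ} (x y : Fin k → ℝ) : l1 (x + y) ≤ l1 x + l1 y := by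
  unfold l1
  rw [← Finset.sum_add_distrib]
  exact Finset.sum_le_sum fun i _ => abs_add_le _ _

private lemma l1_lower {k : ℕ} (x y : Fin k → ℝ) : l1 x - l1 y ≤ l1 (x + y) := by
  have : l1 x ≤ l1 (x + y) + l1 y := by
    have := l1_add_le (x + y) (-y)
    simpa [l1] using this
  linarith

private lemma single_eq_smul {k : ℕ} (i : Fin k) (a : ℝ) :
    Pi.single i a = a • (Pi.single i 1 : Fin k → ℝ) := by
  funext j
  by_cases h : j = i <;> simp [Pi.single_apply, h]

private lemma Lexpand {m n : ℕ} (L : (Fin m → ℝ) →ₗ[ℝ] (Fin n → ℝ)) (w : Fin m → ℝ) :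
    L w = ∑ i, w i • L (Pi.single i 1) := by
  conv_lhs => rw [← Finset.univ_sum_single w, map_sum]
  refine Finset.sum_congr rfl fun i _ => ?_
  rw [single_eq_smul, L.map_smul]

private lemma l1_single_one {k : ℕ} (i : Fin k) : l1 (Pi.single i (1:ℝ)) = 1 := by
  simp [l1, Pi.single_apply, apply_ite abs]

private lemma abs_sign_le_one (x : ℝ) : |Real.sign x| ≤ 1 := by
  rcases lt_trichotomy x 0 with h|h|h
  · simp [Real.sign_of_neg h]
  · simp [h, Real.sign_zero]
  · simp [Real.sign_of_pos h]

private lemma sign_mul_abs' (x : ℝ) : Real.sign x * |x| = x := by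
  rcases lt_trichotomy x 0 with h|h|h
  · simp [Real.sign_of_neg h, abs_of_neg h]
  · simp [h]
  · simp [Real.sign_of_pos h, abs_of_pos h]

private def qd (ε t : ℝ) : ℝ := if 0 ≤ t then ε * ⌊t/ε⌋ else ε * ⌈t/ε⌉

private lemma qd_int (ε t : ℝ) : ∃ z : ℤ, qd ε t = ε * z := by
  unfold qd; split
  · exact ⟨⌊t/ε⌋, rfl⟩
  · exact ⟨⌈t/ε⌉, rfl⟩

private lemma qd_zero (ε : ℝ) : qd ε 0 = 0 := by simp [qd]

private lemma qd_abs_le {ε : ℝ} (hε : 0 < ε) (t : ℝ) : |qd ε t| ≤ |t| := by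
  unfold qd
  split
  · rename_i h
    have h1 : (0:ℝ) ≤ (⌊t/ε⌋:ℝ) := by exact_mod_cast Int.floor_nonneg.2 (div_nonneg h hε.le)
    have h2 : (⌊t/ε⌋ : ℝ) ≤ t/ε := Int.floor_le _
    have h3 : ε * (⌊t/ε⌋:ℝ) ≤ t := by
      have := mul_le_mul_of_nonneg_left h2 hε.le
      calc ε * (⌊t/ε⌋:ℝ) ≤ ε * (t/ε) := this
        _ = t := by field_simp
    have h4 : 0 ≤ ε * (⌊t/ε⌋:ℝ) := mul_nonneg hε.le h1
    rw [abs_of_nonneg h4, abs_of_nonneg h]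
    exact h3
  · rename_i h
    push_neg at h
    have h2 : t/ε ≤ (⌈t/ε⌉ : ℝ) := Int.le_ceil _
    have h1 : (⌈t/ε⌉ : ℝ) ≤ 0 := by
      have : (⌈t/ε⌉:ℤ) ≤ 0 :=
        Int.ceil_le.2 (by exact_mod_cast div_nonpos_of_nonpos_of_nonneg h.le hε.le)
      exact_mod_cast this
    have h3 : t ≤ ε * ⌈t/ε⌉ := by
      have := mul_le_mul_of_nonneg_left h2 hε.le
      calc t = ε * (t/ε) := by field_simp
        _ ≤ ε * (⌈t/ε⌉:ℝ) := this
    have h4 : ε * (⌈t/ε⌉:ℝ) ≤ 0 := mul_nonpos_of_nonneg_of_nonpos hε.le h1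
    rw [abs_of_nonpos h4, abs_of_nonpos h.le]
    linarith

private lemma qd_err {ε : ℝ} (hε : 0 < ε) (t : ℝ) : |qd ε t - t| ≤ ε := by
  unfold qd
  split
  · have h2 : ε * (⌊t/ε⌋:ℝ) ≤ ε * (t/ε) := mul_le_mul_of_nonneg_left (Int.floor_le _) hε.le
    have h3 : ε * (t/ε - 1) < ε * (⌊t/ε⌋:ℝ) :=
      mul_lt_mul_of_pos_left (Int.sub_one_lt_floor _) hε
    have he : ε * (t/ε) = t := by field_simp
    rw [abs_le]
    constructor <;> nlinarith
  · have h2 : ε * (t/ε) ≤ ε * (⌈t/ε⌉:ℝ) := mul_le_mul_of_nonneg_left (Int.le_ceil _) hε.le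
    have h3 : ε * (⌈t/ε⌉:ℝ) < ε * (t/ε + 1) := mul_lt_mul_of_pos_left (Int.ceil_lt_add_one _) hε
    have he : ε * (t/ε) = t := by field_simp
    rw [abs_le]
    constructor <;> nlinarith

private lemma sparsify_s4 {m n : ℕ} (v : Fin m → (Fin n → ℝ)) :
    ∀ (k : ℕ) (c : Fin m → ℝ), (∀ i, 0 ≤ c i) →
      (Finset.univ.filter fun i => c i ≠ 0).card ≤ k →
    ∃ c' : Fin m → ℝ, (∀ i, 0 ≤ c' i) ∧ (∑ i, c' i) ≤ ∑ i, c i ∧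
      (∑ i, c' i • v i) = ∑ i, c i • v i ∧
      (Finset.univ.filter fun i => c' i ≠ 0).card ≤ n := by
  intro k
  induction k with
  | zero =>
    intro c hc hcard
    exact ⟨c, hc, le_rfl, rfl, by omega⟩
  | succ k ih =>
    intro c hc hcard
    by_cases hle : (Finset.univ.filter fun i => c i ≠ 0).card ≤ n
    · exact ⟨c, hc, le_rfl, rfl, hle⟩
    push_neg at hle
    set S : Finset (Fin m) := Finset.univ.filter fun i => c i ≠ 0 with hS
    have hnotLI : ¬ LinearIndependent ℝ (fun i : S => v i) := by
      intro hLI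
      have := hLI.fintype_card_le_finrank
      rw [Module.finrank_fin_fun] at this
      simp [Fintype.card_coe] at this
      omega
    obtain ⟨g, hg0, i₁, hi₁⟩ := Fintype.not_linearIndependent_iff.1 hnotLI
    set d0 : Fin m → ℝ := fun i => if h : i ∈ S then g ⟨i, h⟩ else 0 with hd0
    have hd0sum : ∑ i, d0 i • v i = 0 := by
      rw [← Finset.sum_subset (Finset.subset_univ S)]
      · rw [← hg0, ← Finset.sum_attach S (fun i => d0 i • v i)]
        refine Finset.sum_congr rfl fun i _ => ?_
        simp [hd0, i.2]
      · intro i _ hiS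
        simp [hd0, hiS]
    have hd0supp : ∀ i, d0 i ≠ 0 → i ∈ S := by
      intro i hi
      by_contra h
      simp [hd0, h] at hi
    have hd0ne : d0 ≠ 0 := by
      intro h
      apply hi₁
      have := congrFun h i₁
      simpa [hd0, i₁.2] using this
    obtain ⟨d, hdsum, hdsupp, hdne, hdtot⟩ :
        ∃ d : Fin m → ℝ, (∑ i, d i • v i) = 0 ∧ (∀ i, d i ≠ 0 → i ∈ S) ∧ d ≠ 0 ∧
          0 ≤ ∑ i, d i := by
      rcases le_or_gt 0 (∑ i, d0 i) with h | h
      · exact ⟨d0, hd0sum, hd0supp, hd0ne, h⟩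
      · refine ⟨-d0, by simpa using congrArg Neg.neg hd0sum,
          fun i hi => hd0supp i (by simpa using hi),
          by simpa using neg_ne_zero.2 hd0ne, ?_⟩
        simp only [Pi.neg_apply, Finset.sum_neg_distrib]
        linarith
    have hpos : ∃ i, 0 < d i := by
      by_contra h
      push_neg at h
      have hz : ∀ i ∈ Finset.univ, d i = 0 := by
        intro i _
        have h1 : ∑ i, d i ≤ 0 := Finset.sum_nonpos fun i _ => h i
        have hall : ∀ i ∈ Finset.univ, d i ≤ 0 := fun i _ => h i
        have := (Finset.sum_eq_zero_iff_of_nonpos hall).1 (le_antisymm h1 hdtot)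
        exact this i (Finset.mem_univ i)
      exact hdne (funext fun i => hz i (Finset.mem_univ i))
    set P : Finset (Fin m) := Finset.univ.filter fun i => 0 < d i with hP
    have hPne : P.Nonempty := by
      obtain ⟨i, hi⟩ := hpos
      exact ⟨i, by simp [hP, hi]⟩
    obtain ⟨i₀, hi₀P, hi₀min⟩ := Finset.exists_min_image P (fun i => c i / d i) hPne
    have hi₀pos : 0 < d i₀ := by simpa [hP] using hi₀P
    set t : ℝ := c i₀ / d i₀ with ht
    have ht0 : 0 ≤ t := div_nonneg (hc i₀) hi₀pos.le
    set c' : Fin m → ℝ := fun i => c i - t * d i with hc'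
    have hc'0 : ∀ i, 0 ≤ c' i := by
      intro i
      rcases le_or_gt (d i) 0 with h | h
      · have : t * d i ≤ 0 := mul_nonpos_of_nonneg_of_nonpos ht0 h
        simp only [hc']
        linarith [hc i]
      · have hiP : i ∈ P := by simp [hP, h]
        have hmin := hi₀min i hiP
        have : t * d i ≤ c i := by
          rw [ht]
          calc c i₀ / d i₀ * d i ≤ c i / d i * d i :=
                mul_le_mul_of_nonneg_right hmin h.le
            _ = c i := div_mul_cancel₀ _ h.ne'
        simp only [hc']; linarith
    have hc'sum : (∑ i, c' i) ≤ ∑ i, c i := by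
      simp only [hc', Finset.sum_sub_distrib, ← Finset.mul_sum]
      nlinarith [mul_nonneg ht0 hdtot]
    have hc'v : (∑ i, c' i • v i) = ∑ i, c i • v i := by
      simp only [hc', sub_smul, Finset.sum_sub_distrib, mul_smul, ← Finset.smul_sum, hdsum,
        smul_zero, sub_zero]
    have hsub : (Finset.univ.filter fun i => c' i ≠ 0) ⊆ S.erase i₀ := by
      intro i hi
      simp only [Finset.mem_filter, Finset.mem_univ, true_and] at hi
      refine Finset.mem_erase.2 ⟨?_, ?_⟩
      · rintro rfl
        apply hi
        simp only [hc', ht]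
        field_simp; ring
      · by_contra h
        have hci : c i = 0 := by
          by_contra h'
          exact h (by simp [hS, h'])
        have hdi : d i = 0 := by
          by_contra h'
          exact h (hdsupp i h')
        exact hi (by simp [hc', hci, hdi])
    have hi₀S : i₀ ∈ S := hdsupp i₀ hi₀pos.ne'
    have hcard' : (Finset.univ.filter fun i => c' i ≠ 0).card ≤ k := by
      have h1 := Finset.card_le_card hsub
      have h2 : (S.erase i₀).card = S.card - 1 := Finset.card_erase_of_mem hi₀S
      omega
    obtain ⟨c'', h1, h2, h3, h4⟩ := ih c' hc'0 hcard'
    exact ⟨c'', h1, h2.trans hc'sum, h3.trans hc'v, h4⟩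

set_option maxHeartbeats 1000000

/-- on the Banach–Mazur event, a discretized coefficient matrix
`A ∈ A_{m,n}(ε)` may be chosen, at the cost of doubling `ρ`. -/
theorem discretized_coefficient_representation (n m : ℕ) (hn : 2 ≤ n) (hnm : n ≤ m)
    (ρ ε : ℝ) (hρ : 1 ≤ ρ) (hε0 : 0 < ε) (hε1 : ε ≤ 1) (hερ : ε * ρ * n ^ 2 ≤ 1)
    (Γ : Matrix (Fin n) (Fin m) ℝ)
    (hT : ∃ T : (Fin n → ℝ) ≃ₗ[ℝ] (Fin n → ℝ),
      T '' (Γ.mulVec '' B1 m) ⊆ B1 n ∧ B1 n ⊆ ρ • (T '' (Γ.mulVec '' B1 m))) :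
    ∃ A ∈ AmnEps m n ε, Γ.mulVec '' B1 m ⊆ (2 * ρ) • ((Γ * A).mulVec '' B1 n) := by
  obtain ⟨T, hT1, hT2⟩ := hT
  have hρ0 : (0:ℝ) < ρ := lt_of_lt_of_le one_pos hρ
  set L : (Fin m → ℝ) →ₗ[ℝ] (Fin n → ℝ) := T.toLinearMap ∘ₗ Γ.mulVecLin with hLdef
  have hLapp : ∀ w, L w = T (Γ.mulVec w) := fun w => rfl
  have hLB : ∀ w ∈ B1 m, l1 (L w) ≤ 1 := by
    intro w hw
    have : T (Γ.mulVec w) ∈ B1 n := hT1 ⟨Γ.mulVec w, ⟨w, hw, rfl⟩, rfl⟩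
    simpa [l1, hLapp, B1] using this
  have hsingleB1 : ∀ (k : ℕ) (i : Fin k), (Pi.single i 1 : Fin k → ℝ) ∈ B1 k := by
    intro k i
    show ∑ j, |Pi.single i (1:ℝ) j| ≤ 1
    rw [show (∑ j, |Pi.single i (1:ℝ) j|) = l1 (Pi.single i 1) from rfl, l1_single_one]
  have hLsingle : ∀ i, l1 (L (Pi.single i 1)) ≤ 1 := fun i => hLB _ (hsingleB1 m i)
  have hLcontr : ∀ w, l1 (L w) ≤ l1 w := by
    intro w
    rw [Lexpand]
    calc l1 (∑ i, w i • L (Pi.single i 1)) ≤ ∑ i, l1 (w i • L (Pi.single i 1)) :=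
          l1_sum_le _ _
      _ = ∑ i, |w i| * l1 (L (Pi.single i 1)) := by simp [l1_smul]
      _ ≤ ∑ i, |w i| * 1 :=
          Finset.sum_le_sum fun i _ => mul_le_mul_of_nonneg_left (hLsingle i) (abs_nonneg _)
      _ = l1 w := by simp [l1]
  -- a sparse, ℓ₁-bounded preimage of `ρ⁻¹ • e_j` for every `j`
  have hcol : ∀ j : Fin n, ∃ x : Fin m → ℝ, l1 x ≤ 1 ∧ L x = ρ⁻¹ • (Pi.single j 1 : Fin n → ℝ) ∧
      (Finset.univ.filter fun i => x i ≠ 0).card ≤ n := by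
    intro j
    obtain ⟨w, hwmem, hweq⟩ := Set.mem_smul_set.1 (hT2 (hsingleB1 n j))
    obtain ⟨y, hy, rfl⟩ := hwmem
    obtain ⟨x0, hx0, rfl⟩ := hy
    have hLx0 : L x0 = ρ⁻¹ • (Pi.single j 1 : Fin n → ℝ) := by
      rw [hLapp, ← hweq, smul_smul, inv_mul_cancel₀ hρ0.ne', one_smul]
    obtain ⟨c', hc'0, hc'sum, hc'v, hc'card⟩ := sparsify_s4
      (fun i => Real.sign (x0 i) • L (Pi.single i 1)) m (fun i => |x0 i|)
      (fun i => abs_nonneg _) ((Finset.card_filter_le _ _).trans (by simp))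
    refine ⟨fun i => c' i * Real.sign (x0 i), ?_, ?_, ?_⟩
    · have hterm : ∀ i, |c' i * Real.sign (x0 i)| ≤ c' i := by
        intro i
        rw [abs_mul, abs_of_nonneg (hc'0 i)]
        calc c' i * |Real.sign (x0 i)| ≤ c' i * 1 :=
              mul_le_mul_of_nonneg_left (abs_sign_le_one _) (hc'0 i)
          _ = c' i := mul_one _
      calc l1 (fun i => c' i * Real.sign (x0 i)) ≤ ∑ i, c' i :=
            Finset.sum_le_sum fun i _ => hterm i
        _ ≤ ∑ i, |x0 i| := hc'sum
        _ ≤ 1 := hx0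
    · rw [Lexpand]
      have e1 : ∑ i, (c' i * Real.sign (x0 i)) • L (Pi.single i 1)
          = ∑ i, c' i • (Real.sign (x0 i) • L (Pi.single i 1)) := by
        refine Finset.sum_congr rfl fun i _ => ?_
        exact (smul_smul _ _ _).symm
      have e2 : ∑ i, |x0 i| • (Real.sign (x0 i) • L (Pi.single i 1))
          = ∑ i, x0 i • L (Pi.single i 1) := by
        refine Finset.sum_congr rfl fun i _ => ?_
        rw [smul_smul]
        congr 1
        rw [mul_comm, sign_mul_abs']
      rw [e1, hc'v, e2, ← Lexpand, hLx0]
    · refine le_trans (Finset.card_le_card ?_) hc'card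
      intro i hi
      simp only [Finset.mem_filter, Finset.mem_univ, true_and] at hi ⊢
      intro h
      exact hi (by simp [h])
  choose X hX1 hX2 hX3 using hcol
  -- the discretized matrix
  set A : Matrix (Fin m) (Fin n) ℝ := Matrix.of fun i j => qd ε (X j i) with hA
  have hAmem : A ∈ AmnEps m n ε := by
    refine ⟨fun j => ⟨?_, ?_⟩, fun i j => qd_int ε (X j i)⟩
    · calc ∑ i, |A i j| ≤ ∑ i, |X j i| := Finset.sum_le_sum fun i _ => qd_abs_le hε0 _
        _ ≤ 1 := hX1 j
    · have hsub : {i | A i j ≠ 0} ⊆ ↑(Finset.univ.filter fun i => X j i ≠ 0) := by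
        intro i hi
        simp only [Set.mem_setOf_eq] at hi
        simp only [Finset.coe_filter, Set.mem_setOf_eq, Finset.mem_univ, true_and]
        intro h
        exact hi (by simp [hA, h, qd_zero])
      calc {i | A i j ≠ 0}.ncard ≤ (↑(Finset.univ.filter fun i => X j i ≠ 0) : Set (Fin m)).ncard :=
            Set.ncard_le_ncard hsub (Finset.finite_toSet _)
        _ = (Finset.univ.filter fun i => X j i ≠ 0).card := Set.ncard_coe_finset _
        _ ≤ n := hX3 j
  -- columns of A
  set col : Fin n → (Fin m → ℝ) := fun j i => A i j with hcolDef
  set δ : Fin n → (Fin n → ℝ) := fun j => L (col j) - ρ⁻¹ • (Pi.single j 1 : Fin n → ℝ) with hδ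
  have hδle : ∀ j, l1 (δ j) ≤ ε * n := by
    intro j
    have h1 : δ j = L (col j - X j) := by
      show L (col j) - ρ⁻¹ • (Pi.single j 1 : Fin n → ℝ) = L (col j - X j)
      rw [map_sub, hX2 j]
    rw [h1]
    refine le_trans (hLcontr _) ?_
    set S : Finset (Fin m) := Finset.univ.filter fun i => X j i ≠ 0 with hSdef
    have hout : ∀ i ∈ Finset.univ, i ∉ S → |(col j - X j) i| = 0 := by
      intro i _ hiS
      have hXz : X j i = 0 := by
        by_contra h
        exact hiS (by simp [hSdef, h])
      simp [hcolDef, hA, hXz, qd_zero]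
    calc l1 (col j - X j) = ∑ i ∈ S, |(col j - X j) i| :=
          (Finset.sum_subset (Finset.subset_univ S) hout).symm
      _ ≤ ∑ _i ∈ S, ε := Finset.sum_le_sum fun i _ => by
          simpa [hcolDef, hA] using qd_err hε0 (X j i)
      _ = (S.card : ℝ) * ε := by simp [mul_comm]
      _ ≤ (n : ℝ) * ε := by
          have : (S.card : ℝ) ≤ (n : ℝ) := by exact_mod_cast hX3 j
          exact mul_le_mul_of_nonneg_right this hε0.le
      _ = ε * n := mul_comm _ _
  -- the composed map
  set M : (Fin n → ℝ) →ₗ[ℝ] (Fin n → ℝ) := T.toLinearMap ∘ₗ (Γ * A).mulVecLin with hMdef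
  have hMapp : ∀ u, M u = ρ⁻¹ • u + ∑ j, u j • δ j := by
    intro u
    have h1 : A.mulVec u = ∑ j, u j • col j := by
      funext i
      simp only [Matrix.mulVec, dotProduct, Finset.sum_apply, Pi.smul_apply, smul_eq_mul]
      exact Finset.sum_congr rfl fun j _ => mul_comm _ _
    have h2 : M u = L (A.mulVec u) := by
      show T ((Γ * A).mulVec u) = T (Γ.mulVec (A.mulVec u))
      rw [Matrix.mulVec_mulVec]
    rw [h2, h1, map_sum]
    have h3 : ∀ j, L (u j • col j) = u j • (ρ⁻¹ • (Pi.single j 1 : Fin n → ℝ) + δ j) := by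
      intro j
      rw [L.map_smul]
      congr 1
      show L (col j) = ρ⁻¹ • (Pi.single j 1 : Fin n → ℝ) + (L (col j) - ρ⁻¹ • (Pi.single j 1 : Fin n → ℝ))
      abel
    simp only [h3, smul_add, Finset.sum_add_distrib]
    congr 1
    have h4 : ∑ j, u j • (ρ⁻¹ • (Pi.single j 1 : Fin n → ℝ)) = ρ⁻¹ • u := by
      have hterm : ∀ j, u j • (ρ⁻¹ • (Pi.single j 1 : Fin n → ℝ)) = ρ⁻¹ • (Pi.single j (u j) : Fin n → ℝ) := by
        intro j
        rw [single_eq_smul j (u j)]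
        exact smul_comm _ _ _
      rw [Finset.sum_congr rfl fun j _ => hterm j, ← Finset.smul_sum, Finset.univ_sum_single]
    rw [h4]
  -- quantitative injectivity
  have h2ρn : ε * n * (2 * ρ) ≤ 1 := by
    have hn2 : (2:ℝ) ≤ (n:ℝ) := by exact_mod_cast hn
    have hnn : (0:ℝ) ≤ (n:ℝ) := by positivity
    nlinarith [mul_nonneg (mul_nonneg hε0.le hρ0.le) hnn]
  have hKey : ∀ u, l1 u ≤ (2 * ρ) * l1 (M u) := by
    intro u
    have hδsum : l1 (∑ j, u j • δ j) ≤ (ε * n) * l1 u := by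
      calc l1 (∑ j, u j • δ j) ≤ ∑ j, l1 (u j • δ j) := l1_sum_le _ _
        _ = ∑ j, |u j| * l1 (δ j) := by simp [l1_smul]
        _ ≤ ∑ j, |u j| * (ε * n) :=
            Finset.sum_le_sum fun j _ => mul_le_mul_of_nonneg_left (hδle j) (abs_nonneg _)
        _ = (ε * n) * l1 u := by rw [l1, ← Finset.sum_mul, mul_comm]
    have hlow : ρ⁻¹ * l1 u - (ε * n) * l1 u ≤ l1 (M u) := by
      have := l1_lower (ρ⁻¹ • u) (∑ j, u j • δ j)
      rw [← hMapp u] at this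
      have habs : l1 (ρ⁻¹ • u) = ρ⁻¹ * l1 u := by
        rw [l1_smul, abs_of_nonneg (by positivity)]
      linarith [hδsum]
    have hinv : ρ * ρ⁻¹ = 1 := mul_inv_cancel₀ hρ0.ne'
    nlinarith [l1_nonneg u, l1_nonneg (M u), hlow, h2ρn, hρ0]
  have hInj : Function.Injective M := by
    intro a b hab
    have h0 : M (a - b) = 0 := by rw [map_sub, hab, sub_self]
    have := hKey (a - b)
    rw [h0] at this
    have hz : l1 (0 : Fin n → ℝ) = 0 := by simp [l1]
    rw [hz, mul_zero] at this
    have := eq_zero_of_l1 this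
    exact sub_eq_zero.1 this
  have hSurj : Function.Surjective M := LinearMap.injective_iff_surjective.1 hInj
  refine ⟨A, hAmem, ?_⟩
  rintro y ⟨x0, hx0, rfl⟩
  obtain ⟨u, hu⟩ := hSurj (T (Γ.mulVec x0))
  have hul1 : l1 u ≤ 2 * ρ := by
    have h1 := hKey u
    rw [hu] at h1
    have h2 : l1 (T (Γ.mulVec x0)) ≤ 1 := by
      rw [← hLapp]; exact hLB x0 hx0
    nlinarith [hρ0]
  have h2ρ0 : (0:ℝ) < 2 * ρ := by positivity
  refine Set.mem_smul_set.2 ⟨(Γ * A).mulVec ((2 * ρ)⁻¹ • u), ⟨(2 * ρ)⁻¹ • u, ?_, rfl⟩, ?_⟩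
  · show ∑ i, |((2 * ρ)⁻¹ • u) i| ≤ 1
    have : l1 ((2 * ρ)⁻¹ • u) ≤ 1 := by
      rw [l1_smul, abs_of_nonneg (by positivity)]
      calc (2 * ρ)⁻¹ * l1 u ≤ (2 * ρ)⁻¹ * (2 * ρ) :=
            mul_le_mul_of_nonneg_left hul1 (by positivity)
        _ = 1 := inv_mul_cancel₀ h2ρ0.ne'
    exact this
  · rw [Matrix.mulVec_smul, smul_smul, mul_inv_cancel₀ h2ρ0.ne', one_smul]
    apply T.injective
    rw [← hu]
    show T ((Γ * A).mulVec u) = M u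
    rfl
end
end

section
/- Fix integers 1 ≤ n ≤ m, a real ρ ≥ 1, and A ∈ A_{m,n}. Let S(A) := ⋃_{i=1}^n supp(A^{(i)}) ⊆ [m] (where A^{(i)} is the i-th column of A) and N(A) := m − |S(A)|. Fix deterministic vectors ω_j ∈ ℝⁿ for j ∈ S(A), let (g_j)_{j ∈ [m]∖S(A)} be independent N(0, Idₙ) random vectors, and let Γ be the random n×m matrix whose j-th column is ω_j for j ∈ S(A) and g_j for j ∉ S(A). Set K := 2ρ·(ΓA)(B₁ⁿ); this set is deterministic, since all rows of A outside S(A) vanish. Then ℙ( Γ(B₁^m) ⊆ 2ρ·(ΓA)(B₁ⁿ) ) equals γ_n(K)^{N(A)} if ω_j ∈ K for every j ∈ S(A), and equals 0 otherwise. -/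
open MeasureTheory ProbabilityTheory Matrix
open scoped ENNReal NNReal Pointwise Classical

noncomputable section

/-- Standard Gaussian measure on `Fin d → ℝ`. -/
def gaussianPi (d : ℕ) : Measure (Fin d → ℝ) :=
  Measure.pi fun _ => gaussianReal 0 1

/-- Law of an `n × m` random matrix (encoded as `Fin n → Fin m → ℝ`) with i.i.d. `N(0,1)` entries:
this realizes independent `N(0, Idₙ)` columns. -/
def gaussianMatrix (n m : ℕ) : Measure (Fin n → Fin m → ℝ) :=
  Measure.pi fun _ => gaussianPi m

instance (d : ℕ) : IsProbabilityMeasure (gaussianPi d) := by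
  unfold gaussianPi; infer_instance

instance (n m : ℕ) : IsProbabilityMeasure (gaussianMatrix n m) := by
  unfold gaussianMatrix; infer_instance

lemma swap_measurable (n m : ℕ) :
    Measurable (fun (g : Fin n → Fin m → ℝ) (j : Fin m) (i : Fin n) => g i j) :=
  measurable_pi_lambda _ fun j => measurable_pi_lambda _ fun i =>
    (measurable_pi_apply j).comp (measurable_pi_apply i)

/-- Transposing an i.i.d. Gaussian matrix: row-product of column-products becomes
column-product of row-products. -/
lemma gaussianMatrix_map_swap (n m : ℕ) :
    (gaussianMatrix n m).map (fun g (j : Fin m) (i : Fin n) => g i j)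
      = Measure.pi (fun _ : Fin m => gaussianPi n) := by
  symm
  refine Measure.pi_eq_generateFrom (fun _ => generateFrom_pi)
    (fun _ => isPiSystem_pi) (fun _ => ?_) ?_
  · refine ⟨fun _ => Set.univ, fun _ => ⟨fun _ => Set.univ, ?_, by simp⟩,
      fun _ => by simp, Set.iUnion_const _⟩
    intro i _
    simp only [Set.mem_setOf_eq]
    exact MeasurableSet.univ
  · intro s hs
    choose t ht hts using hs
    have htm : ∀ j i, MeasurableSet (t j i) := fun j i => ht j i (Set.mem_univ i)
    have hsm : ∀ j, MeasurableSet (s j) := fun j => by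
      rw [← hts j]; exact MeasurableSet.univ_pi fun i => htm j i
    rw [Measure.map_apply (swap_measurable n m) (MeasurableSet.univ_pi hsm)]
    have hpre : (fun (g : Fin n → Fin m → ℝ) (j : Fin m) (i : Fin n) => g i j) ⁻¹'
        (Set.univ.pi s) = Set.univ.pi (fun i => Set.univ.pi fun j => t j i) := by
      ext g
      simp only [Set.mem_preimage, Set.mem_pi, Set.mem_univ, true_implies, ← hts]
      exact forall_comm
    rw [hpre]
    unfold gaussianMatrix gaussianPi
    rw [Measure.pi_pi]
    simp_rw [Measure.pi_pi]
    rw [Finset.prod_comm]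
    congr 1
    ext j
    rw [← Measure.pi_pi, hts]

lemma convex_B1 (k : ℕ) : Convex ℝ (B1 k) := by
  intro x hx y hy a b ha hb hab
  simp only [B1, Set.mem_setOf_eq] at *
  calc ∑ i, |(a • x + b • y) i| ≤ ∑ i, (a * |x i| + b * |y i|) := by
        refine Finset.sum_le_sum fun i _ => ?_
        simp only [Pi.add_apply, Pi.smul_apply, smul_eq_mul]
        calc |a * x i + b * y i| ≤ |a * x i| + |b * y i| := abs_add_le _ _
          _ = a * |x i| + b * |y i| := by
            rw [abs_mul, abs_mul, abs_of_nonneg ha, abs_of_nonneg hb]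
    _ = a * ∑ i, |x i| + b * ∑ i, |y i| := by
        rw [Finset.sum_add_distrib, Finset.mul_sum, Finset.mul_sum]
    _ ≤ a * 1 + b * 1 := by gcongr
    _ = 1 := by linarith

lemma zero_mem_B1 (k : ℕ) : (0 : Fin k → ℝ) ∈ B1 k := by simp [B1]

lemma neg_mem_B1 {k : ℕ} {x : Fin k → ℝ} (hx : x ∈ B1 k) : -x ∈ B1 k := by
  simpa [B1] using hx

lemma isCompact_B1 (k : ℕ) : IsCompact (B1 k) := by
  refine Metric.isCompact_of_isClosed_isBounded ?_ ?_
  · have : B1 k = (fun x : Fin k → ℝ => ∑ i, |x i|) ⁻¹' Set.Iic 1 := rfl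
    rw [this]
    exact IsClosed.preimage (by continuity) isClosed_Iic
  · refine (Metric.isBounded_iff_subset_closedBall 0).2 ⟨1, fun x hx => ?_⟩
    simp only [Metric.mem_closedBall, dist_zero_right]
    refine (pi_norm_le_iff_of_nonneg zero_le_one).2 fun i => ?_
    rw [Real.norm_eq_abs]
    exact le_trans (Finset.single_le_sum (fun j _ => abs_nonneg (x j)) (Finset.mem_univ i)) hx

/-- A symmetric convex set containing `0` absorbs `ℓ₁`-subconvex combinations. -/
lemma sum_smul_mem {k m : ℕ} {s : Set (Fin k → ℝ)} (hconv : Convex ℝ s) (h0 : 0 ∈ s)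
    (hsym : ∀ x ∈ s, -x ∈ s) {c : Fin m → Fin k → ℝ} (hc : ∀ j, c j ∈ s)
    {x : Fin m → ℝ} (hx : ∑ j, |x j| ≤ 1) : ∑ j, x j • c j ∈ s := by
  set p : Fin m → Fin k → ℝ := fun j => if 0 ≤ x j then c j else -(c j) with hp
  have hps : ∀ j, p j ∈ s := fun j => by
    by_cases h : 0 ≤ x j <;> simp only [hp, h, if_true, if_false]
    · exact hc j
    · exact hsym _ (hc j)
  have hxc : ∀ j, x j • c j = |x j| • p j := by
    intro j
    by_cases h : 0 ≤ x j
    · simp [hp, h, abs_of_nonneg h]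
    · simp only [hp, h, if_false, smul_neg, abs_of_neg (lt_of_not_ge h), neg_smul, neg_neg]
  simp_rw [hxc]
  set t : ℝ := ∑ j, |x j| with htdef
  have ht0 : 0 ≤ t := Finset.sum_nonneg fun j _ => abs_nonneg _
  rcases eq_or_lt_of_le ht0 with h | h
  · have : ∀ j ∈ Finset.univ, |x j| = 0 := by
      intro j _
      exact le_antisymm
        (h ▸ Finset.single_le_sum (fun i _ => abs_nonneg (x i)) (Finset.mem_univ j)) (abs_nonneg _)
    rw [Finset.sum_congr rfl fun j hj => by rw [this j hj, zero_smul]]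
    simpa using h0
  · have hy : (∑ j, (|x j| / t) • p j) ∈ s := by
      refine hconv.sum_mem (fun j _ => div_nonneg (abs_nonneg _) ht0) ?_ (fun j _ => hps j)
      rw [← Finset.sum_div, ← htdef, div_self (ne_of_gt h)]
    have : ∑ j, |x j| • p j = t • ∑ j, (|x j| / t) • p j := by
      rw [Finset.smul_sum]
      refine Finset.sum_congr rfl fun j _ => ?_
      rw [smul_smul]
      congr 1
      field_simp
    rw [this]
    exact hconv.smul_mem_of_zero_mem h0 hy ⟨ht0, hx⟩

section Kfacts

variable {k l : ℕ} (c : ℝ) (M : Matrix (Fin k) (Fin l) ℝ)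

lemma Kconv : Convex ℝ (c • (M.mulVec '' B1 l)) := by
  have him : M.mulVec '' B1 l = M.mulVecLin '' B1 l := by
    apply Set.image_congr
    intro x _
    rw [Matrix.mulVecLin_apply]
  have hc : Convex ℝ (M.mulVec '' B1 l) := by
    rw [him]
    exact (convex_B1 l).linear_image M.mulVecLin
  exact hc.smul c

lemma Kzero : (0 : Fin k → ℝ) ∈ c • (M.mulVec '' B1 l) :=
  Set.mem_smul_set.2 ⟨0, ⟨0, zero_mem_B1 l, M.mulVec_zero⟩, smul_zero c⟩

lemma Kneg : ∀ x ∈ c • (M.mulVec '' B1 l), -x ∈ c • (M.mulVec '' B1 l) := by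
  rintro x hx
  rcases Set.mem_smul_set.1 hx with ⟨y, ⟨z, hz, rfl⟩, rfl⟩
  exact Set.mem_smul_set.2 ⟨M.mulVec (-z), ⟨-z, neg_mem_B1 hz, rfl⟩,
    by rw [Matrix.mulVec_neg, smul_neg]⟩

lemma Kmeas : MeasurableSet (c • (M.mulVec '' B1 l)) := by
  have h1 : Continuous M.mulVec := by
    have : (M.mulVec : (Fin l → ℝ) → (Fin k → ℝ)) = M.mulVecLin := by
      funext v; rw [Matrix.mulVecLin_apply]
    rw [this]
    exact M.mulVecLin.continuous_of_finiteDimensional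
  have h2 : IsCompact (M.mulVec '' B1 l) := (isCompact_B1 l).image h1
  have h3 : IsCompact (c • (M.mulVec '' B1 l)) := h2.smul c
  exact h3.isClosed.measurableSet

/-- Column criterion: the image of the cross-polytope is contained in a symmetric
convex set containing `0` iff every column lies in it. -/
lemma image_B1_subset_iff {m : ℕ} (N : Matrix (Fin k) (Fin m) ℝ) {s : Set (Fin k → ℝ)}
    (hconv : Convex ℝ s) (h0 : 0 ∈ s) (hsym : ∀ x ∈ s, -x ∈ s) :
    N.mulVec '' B1 m ⊆ s ↔ ∀ j, (fun i => N i j) ∈ s := by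
  constructor
  · intro h j
    have hmem : (Pi.single j 1 : Fin m → ℝ) ∈ B1 m := by
      simp only [B1, Set.mem_setOf_eq, Pi.single_apply]
      rw [Finset.sum_congr rfl (fun i _ => abs_ite_eq i j)]
      simp
    have := h (Set.mem_image_of_mem _ hmem)
    rwa [Matrix.mulVec_single, MulOpposite.op_one, one_smul] at this
  · rintro h _ ⟨x, hx, rfl⟩
    have : N.mulVec x = ∑ j, x j • (fun i => N i j) := by
      funext i
      simp only [Matrix.mulVec, dotProduct, Finset.sum_apply, Pi.smul_apply, smul_eq_mul]
      exact Finset.sum_congr rfl fun j _ => mul_comm _ _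
    rw [this]
    exact sum_smul_mem hconv h0 hsym h hx
  where
    abs_ite_eq (i j : Fin m) : |if i = j then (1:ℝ) else 0| = if i = j then 1 else 0 := by
      by_cases h : i = j <;> simp [h]

end Kfacts

/-- powering identity: conditioning on the exposed columns `ω_j`, `j ∈ S(A)`,
the probability that `Γ(B₁^m) ⊆ 2ρ·(ΓA)(B₁ⁿ)` equals `γₙ(K)^{N(A)}` if all exposed columns
lie in `K`, and `0` otherwise. -/
theorem powering_identity (n m : ℕ) (hn : 1 ≤ n) (hnm : n ≤ m) (ρ : ℝ) (hρ : 1 ≤ ρ)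
    (A : Matrix (Fin m) (Fin n) ℝ) (hA : A ∈ Amn m n) (ω : Fin m → Fin n → ℝ) :
    -- the exposed index set `S(A)` and `N(A) = m - |S(A)|`
    let S : Set (Fin m) := {j | ∃ i, A j i ≠ 0}
    let NA : ℕ := m - S.ncard
    -- the random matrix: column `j` equals `ω j` for `j ∈ S(A)`, and a fresh Gaussian otherwise
    let Γ : (Fin n → Fin m → ℝ) → Matrix (Fin n) (Fin m) ℝ :=
      fun g => Matrix.of fun i j => if j ∈ S then ω j i else g i j
    -- the deterministic target set `K = 2ρ·(ΓA)(B₁ⁿ)` (rows of `A` outside `S(A)` vanish)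
    let Γ₀ : Matrix (Fin n) (Fin m) ℝ := Matrix.of fun i j => if j ∈ S then ω j i else 0
    let K : Set (Fin n → ℝ) := (2 * ρ) • ((Γ₀ * A).mulVec '' B1 n)
    let E : Set (Fin n → Fin m → ℝ) :=
      {g | (Γ g).mulVec '' B1 m ⊆ (2 * ρ) • ((Γ g * A).mulVec '' B1 n)}
    ((∀ j ∈ S, ω j ∈ K) → gaussianMatrix n m E = gaussianPi n K ^ NA) ∧
      ((¬ ∀ j ∈ S, ω j ∈ K) → gaussianMatrix n m E = 0) := by
  intro S NA Γ Γ₀ K E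
  -- the product `Γ g * A` does not depend on `g`
  have hΓA : ∀ g, Γ g * A = Γ₀ * A := by
    intro g
    ext i k
    simp only [Matrix.mul_apply, Γ, Γ₀, Matrix.of_apply]
    refine Finset.sum_congr rfl fun j _ => ?_
    by_cases hj : j ∈ S
    · simp [hj]
    · have hA0 : A j k = 0 := by
        by_contra h
        exact hj ⟨k, h⟩
      simp [hj, hA0]
  have hKconv : Convex ℝ K := Kconv _ _
  have hK0 : (0 : Fin n → ℝ) ∈ K := Kzero _ _
  have hKsym : ∀ x ∈ K, -x ∈ K := Kneg _ _
  have hKmeas : MeasurableSet K := Kmeas _ _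
  -- membership criterion for the event `E`
  have hE : ∀ g, g ∈ E ↔ ∀ j, (if j ∈ S then ω j else fun i => g i j) ∈ K := by
    intro g
    have hcol : ∀ j, (fun i => Γ g i j) = if j ∈ S then ω j else fun i => g i j := by
      intro j
      by_cases hj : j ∈ S <;> funext i <;> simp [Γ, hj]
    have : g ∈ E ↔ (Γ g).mulVec '' B1 m ⊆ K := by
      simp only [E, Set.mem_setOf_eq, hΓA g, K]
    rw [this, image_B1_subset_iff _ hKconv hK0 hKsym]
    exact forall_congr' fun j => by rw [hcol j]
  constructor
  · -- main case: all exposed columns lie in `K`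
    intro hω
    set T : Fin m → Set (Fin n → ℝ) := fun j => if j ∈ S then Set.univ else K with hT
    have hTmeas : ∀ j, MeasurableSet (T j) := fun j => by
      by_cases hj : j ∈ S <;> simp only [hT, hj, if_true, if_false]
      · exact MeasurableSet.univ
      · exact hKmeas
    have hEeq : E = (fun g (j : Fin m) (i : Fin n) => g i j) ⁻¹' Set.univ.pi T := by
      ext g
      rw [Set.mem_preimage, Set.mem_pi, hE g]
      constructor
      · intro h j _
        by_cases hj : j ∈ S
        · simp [hT, hj]
        · have := h j
          rw [if_neg hj] at this
          simpa [hT, hj] using this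
      · intro h j
        by_cases hj : j ∈ S
        · rw [if_pos hj]
          exact hω j hj
        · rw [if_neg hj]
          have := h j (Set.mem_univ j)
          simpa [hT, hj] using this
    rw [hEeq, ← Measure.map_apply (swap_measurable n m) (MeasurableSet.univ_pi hTmeas),
      gaussianMatrix_map_swap, Measure.pi_pi]
    have hval : ∀ j, (gaussianPi n) (T j) = if j ∈ S then 1 else gaussianPi n K := by
      intro j
      by_cases hj : j ∈ S <;> simp [hT, hj, measure_univ]
    rw [Finset.prod_congr rfl fun j _ => hval j, Finset.prod_ite, Finset.prod_const,
      Finset.prod_const, one_pow, one_mul]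
    congr 1
    -- counting: `|{j ∉ S}| = m - |S|`
    have h1 : S.ncard = (Finset.univ.filter (fun j => j ∈ S)).card := by
      rw [Set.ncard_eq_toFinset_card']
      congr 1
      ext j
      simp
    have h2 := Finset.card_filter_add_card_filter_not
      (s := (Finset.univ : Finset (Fin m))) (fun j => j ∈ S)
    simp only [Finset.card_univ, Fintype.card_fin] at h2
    simp only [NA, h1]
    omega
  · -- degenerate case: some exposed column outside `K`
    intro hω
    have : E = ∅ := by
      rw [Set.eq_empty_iff_forall_notMem]
      intro g hg
      refine hω fun j hj => ?_
      have := (hE g).1 hg j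
      rwa [if_pos hj] at this
    rw [this, measure_empty]
end
end

section
/- Let n, m ∈ ℕ with n, m ≥ 1, let s ≥ 1 be real, ρ > 0, Γ ∈ ℝ^{n×m}, and let A ∈ ℝ^{m×n} have every column a satisfying ‖a‖₁ ≤ 1. Define A^{(K)}, A^{(U)} ∈ ℝ^{m×n} entrywise by A^{(K)}_{ji} = A_{ji}·1_{{|A_{ji}| ≥ 1/s}} and A^{(U)}_{ji} = A_{ji}·1_{{|A_{ji}| < 1/s}}. For i ∈ [n] set v_i := Γ A^{(K)} e_i and u_i := Γ A^{(U)} e_i, and define w_i := v_i for 1 ≤ i ≤ n and w_{n+i} := u_i for 1 ≤ i ≤ n. Then 2ρ·(ΓA)(B₁ⁿ) ⊆ 4ρ·⋃_{I ⊆ [2n], |I| = n} conv{± w_i : i ∈ I}. -/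
open MeasureTheory Matrix
open scoped ENNReal NNReal Pointwise

noncomputable section

/-- Absolute convex hull of a finite family of vectors. -/
def absConv {ι V : Type*} [AddCommGroup V] [Module ℝ V] (s : Finset ι) (x : ι → V) : Set V :=
  {y | ∃ a : ι → ℝ, ∑ i ∈ s, |a i| ≤ 1 ∧ y = ∑ i ∈ s, a i • x i}

/-- Carathéodory-type reduction with nonnegative coefficients: a subconvex combination
of vectors in `ℝ^n` can be rewritten as a subconvex combination supported on at most `n`
of the indices. -/
lemma reduce_nonneg_aux (n : ℕ) {ι : Type*} [DecidableEq ι] :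
    ∀ (N : ℕ) (J : Finset ι), J.card ≤ N → ∀ (z : ι → Fin n → ℝ) (p : ι → ℝ),
    (∀ j ∈ J, 0 ≤ p j) → (∑ j ∈ J, p j) ≤ 1 →
    ∃ K, K ⊆ J ∧ K.card ≤ n ∧ ∃ q : ι → ℝ, (∀ j ∈ K, 0 ≤ q j) ∧ (∑ j ∈ K, q j) ≤ 1 ∧
      ∑ j ∈ K, q j • z j = ∑ j ∈ J, p j • z j := by
  intro N
  induction N with
  | zero =>
    intro J hJ z p hp hsum
    exact ⟨J, subset_rfl, hJ.trans (Nat.zero_le n), p, hp, hsum, rfl⟩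
  | succ N ihN =>
    intro J hJ z p hp hsum
    by_cases hc : J.card ≤ n
    · exact ⟨J, subset_rfl, hc, p, hp, hsum, rfl⟩
    push_neg at hc
    -- the family (z j)_{j ∈ J} is linearly dependent
    have hdep : ¬ LinearIndependent ℝ (fun j : J => z j) := by
      intro h
      have := h.fintype_card_le_finrank
      rw [Module.finrank_fin_fun, Fintype.card_coe] at this
      omega
    rw [Fintype.not_linearIndependent_iff] at hdep
    obtain ⟨g, hg0, i0, hgi0⟩ := hdep
    -- extend the relation to a function on ι
    set c0 : ι → ℝ := fun j => if h : j ∈ J then g ⟨j, h⟩ else 0 with hc0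
    have hc0sum : ∑ j ∈ J, c0 j • z j = 0 := by
      rw [← Finset.sum_attach J (fun j => c0 j • z j)]
      simpa [c0] using hg0
    have hc0ne : ∃ j ∈ J, c0 j ≠ 0 := ⟨i0, i0.2, by simpa [c0, dif_pos i0.2] using hgi0⟩
    -- normalize so that the total sum of the relation coefficients is ≤ 0
    obtain ⟨c, hcz, hcne, hcle⟩ :
        ∃ c : ι → ℝ, (∑ j ∈ J, c j • z j = 0) ∧ (∃ j ∈ J, c j ≠ 0) ∧ (∑ j ∈ J, c j) ≤ 0 := by
      rcases le_or_gt (∑ j ∈ J, c0 j) 0 with h | h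
      · exact ⟨c0, hc0sum, hc0ne, h⟩
      · refine ⟨fun j => -c0 j, ?_, ?_, ?_⟩
        · simp [neg_smul, Finset.sum_neg_distrib, hc0sum]
        · obtain ⟨j, hj, hjne⟩ := hc0ne; exact ⟨j, hj, by simpa using hjne⟩
        · simp only [Finset.sum_neg_distrib]; linarith
    -- some coefficient is negative
    have hneg : ∃ j ∈ J, c j < 0 := by
      by_contra hno
      push_neg at hno
      have hz : ∀ j ∈ J, c j = 0 := by
        have := (Finset.sum_eq_zero_iff_of_nonneg hno).mp
          (le_antisymm hcle (Finset.sum_nonneg hno))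
        exact this
      obtain ⟨j, hj, hjne⟩ := hcne
      exact hjne (hz j hj)
    -- minimize p j / (-c j) over negative coefficients
    set T : Finset ι := J.filter (fun j => c j < 0) with hT
    have hTne : T.Nonempty := by
      obtain ⟨j, hj, hjneg⟩ := hneg
      exact ⟨j, Finset.mem_filter.mpr ⟨hj, hjneg⟩⟩
    obtain ⟨j', hj'T, hj'min⟩ := Finset.exists_min_image T (fun j => p j / (-c j)) hTne
    have hj'J : j' ∈ J := (Finset.mem_filter.mp hj'T).1
    have hj'neg : c j' < 0 := (Finset.mem_filter.mp hj'T).2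
    set t : ℝ := p j' / (-c j') with ht
    have htnn : 0 ≤ t := div_nonneg (hp j' hj'J) (by linarith)
    set q : ι → ℝ := fun j => p j + t * c j with hq
    have hqj' : q j' = 0 := by
      have hmc : t * (-c j') = p j' := div_mul_cancel₀ _ (by linarith)
      simp only [q]
      nlinarith
    have hqnn : ∀ j ∈ J, 0 ≤ q j := by
      intro j hj
      rcases le_or_gt 0 (c j) with h | h
      · have h1 := hp j hj
        have h2 : 0 ≤ t * c j := mul_nonneg htnn h
        simp only [q]; linarith
      · have hjT : j ∈ T := Finset.mem_filter.mpr ⟨hj, h⟩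
        have hmin := hj'min j hjT
        have hpos : 0 < -c j := by linarith
        have h3 : t * (-c j) ≤ p j := by
          have := (le_div_iff₀ hpos).mp hmin
          linarith
        simp only [q]; nlinarith
    have hqsum : (∑ j ∈ J, q j) ≤ 1 := by
      have : ∑ j ∈ J, q j = (∑ j ∈ J, p j) + t * (∑ j ∈ J, c j) := by
        simp [q, Finset.sum_add_distrib, Finset.mul_sum]
      rw [this]
      nlinarith
    have hqvec : ∑ j ∈ J, q j • z j = ∑ j ∈ J, p j • z j := by
      have : ∀ j, q j • z j = p j • z j + t • (c j • z j) := by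
        intro j; simp [q, add_smul, smul_smul]
      simp_rw [this, Finset.sum_add_distrib, ← Finset.smul_sum, hcz, smul_zero, add_zero]
    -- recurse on J.erase j'
    have hcard : (J.erase j').card ≤ N := by
      have := Finset.card_erase_of_mem hj'J
      omega
    obtain ⟨K, hKsub, hKcard, q', hq'nn, hq'sum, hq'vec⟩ :=
      ihN (J.erase j') hcard z q (fun j hj => hqnn j (Finset.mem_of_mem_erase hj))
        (by
          have := Finset.add_sum_erase J q hj'J
          rw [hqj'] at this
          linarith [this.ge, this.le])
    refine ⟨K, hKsub.trans (Finset.erase_subset _ _), hKcard, q', hq'nn, hq'sum, ?_⟩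
    rw [hq'vec, ← hqvec]
    have := Finset.add_sum_erase J (fun j => q j • z j) hj'J
    simp only [hqj', zero_smul, zero_add] at this
    exact this

/-- Signed version: an absolutely convex combination of vectors of `ℝ^n` can be supported
on at most `n` indices. -/
lemma reduce_abs (n : ℕ) {ι : Type*} [DecidableEq ι] (J : Finset ι)
    (w : ι → Fin n → ℝ) (a : ι → ℝ) (h : ∑ j ∈ J, |a j| ≤ 1) :
    ∃ K, K ⊆ J ∧ K.card ≤ n ∧ ∃ b : ι → ℝ, (∑ j ∈ K, |b j| ≤ 1) ∧
      ∑ j ∈ K, b j • w j = ∑ j ∈ J, a j • w j := by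
  classical
  set sgn : ι → ℝ := fun j => if a j < 0 then -1 else 1 with hsgn
  have habs : ∀ j, |sgn j| = 1 := by
    intro j; by_cases h : a j < 0 <;> simp [sgn, h]
  have hsa : ∀ j, sgn j * |a j| = a j := by
    intro j
    by_cases h : a j < 0
    · simp [sgn, h, abs_of_neg h]
    · push_neg at h
      simp [sgn, not_lt.mpr h, abs_of_nonneg h]
  obtain ⟨K, hKsub, hKcard, q, hqnn, hqsum, hqvec⟩ :=
    reduce_nonneg_aux n J.card J le_rfl (fun j => sgn j • w j) (fun j => |a j|)
      (fun j _ => abs_nonneg _) h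
  refine ⟨K, hKsub, hKcard, fun j => q j * sgn j, ?_, ?_⟩
  · calc ∑ j ∈ K, |q j * sgn j| = ∑ j ∈ K, q j := by
          refine Finset.sum_congr rfl fun j hj => ?_
          rw [abs_mul, habs, mul_one, abs_of_nonneg (hqnn j hj)]
        _ ≤ 1 := hqsum
  · have h1 : ∑ j ∈ J, |a j| • (sgn j • w j) = ∑ j ∈ J, a j • w j :=
      Finset.sum_congr rfl fun j _ => by rw [smul_smul, mul_comm, hsa]
    calc ∑ j ∈ K, (q j * sgn j) • w j = ∑ j ∈ K, q j • (sgn j • w j) :=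
          Finset.sum_congr rfl fun j _ => by rw [smul_smul]
      _ = _ := by rw [hqvec, h1]


/-- bridge lemma: after the `K/U` coefficient split at level `1/s`, the set
`2ρ·(ΓA)(B₁ⁿ)` is contained in `4ρ` times the union of the mixed cross-polytopes generated
by `n` of the `2n` vectors `v₁,…,vₙ,u₁,…,uₙ`. -/
theorem bridge_lemma (n m : ℕ) (hn : 1 ≤ n) (hm : 1 ≤ m) (s ρ : ℝ) (hs : 1 ≤ s)
    (hρ : 0 < ρ) (Γ : Matrix (Fin n) (Fin m) ℝ) (A : Matrix (Fin m) (Fin n) ℝ)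
    (hA : ∀ i, (∑ j, |A j i|) ≤ 1) :
    -- the `K`-part and `U`-part of the coefficient matrix
    let AK : Matrix (Fin m) (Fin n) ℝ := Matrix.of fun j i => if 1 / s ≤ |A j i| then A j i else 0
    let AU : Matrix (Fin m) (Fin n) ℝ := Matrix.of fun j i => if |A j i| < 1 / s then A j i else 0
    -- the `2n` generators: `w i = v i = Γ A^(K) e_i` and `w (n+i) = u i = Γ A^(U) e_i`
    let w : Fin n ⊕ Fin n → Fin n → ℝ :=
      Sum.elim (fun i => (Γ * AK)ᵀ i) (fun i => (Γ * AU)ᵀ i)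
    (2 * ρ) • ((Γ * A).mulVec '' B1 n) ⊆
      (4 * ρ) • ⋃ (I : Finset (Fin n ⊕ Fin n)) (_ : I.card = n), absConv I w := by
  intro AK AU w
  rintro y hy
  rw [Set.mem_smul_set] at hy
  obtain ⟨y0, ⟨x, hx, rfl⟩, rfl⟩ := hy
  rw [Set.mem_smul_set]
  refine ⟨(1/2 : ℝ) • (Γ * A).mulVec x, ?_, ?_⟩
  swap
  · rw [smul_smul]
    have h4 : (4:ℝ) * ρ * (1/2) = 2 * ρ := by ring
    rw [h4]
  -- the split of the matrix
  have hsplit : AK + AU = A := by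
    ext j i
    simp only [AK, AU, Matrix.add_apply, Matrix.of_apply]
    by_cases h : 1 / s ≤ |A j i|
    · rw [if_pos h, if_neg (not_lt.mpr h), add_zero]
    · rw [if_neg h, if_pos (not_le.mp h), zero_add]
  have hmv : (Γ * A).mulVec x = (Γ * AK).mulVec x + (Γ * AU).mulVec x := by
    rw [← hsplit, Matrix.mul_add, Matrix.add_mulVec]
  have key : ∀ B : Matrix (Fin n) (Fin n) ℝ, B.mulVec x = ∑ i, x i • Bᵀ i := by
    intro B
    funext j
    simp [Matrix.mulVec, dotProduct, Finset.sum_apply, mul_comm]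
  -- write (1/2) • ΓAx as an absolutely convex combination of the w's
  set a : Fin n ⊕ Fin n → ℝ := Sum.elim (fun i => (1/2 : ℝ) * x i) (fun i => (1/2 : ℝ) * x i)
    with ha
  have hrep : (1/2 : ℝ) • (Γ * A).mulVec x = ∑ j : Fin n ⊕ Fin n, a j • w j := by
    rw [hmv, key, key, smul_add, Finset.smul_sum, Finset.smul_sum,
      Fintype.sum_sum_type]
    simp [a, w, smul_smul]
  have hasum : ∑ j : Fin n ⊕ Fin n, |a j| ≤ 1 := by
    rw [Fintype.sum_sum_type]
    simp only [a, Sum.elim_inl, Sum.elim_inr, abs_mul]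
    have : ∑ i, |(1/2 : ℝ)| * |x i| + ∑ i, |(1/2 : ℝ)| * |x i| = ∑ i, |x i| := by
      rw [← Finset.mul_sum]
      have h2 : |(1/2:ℝ)| = 1/2 := by norm_num
      rw [h2]; ring
    rw [this]
    exact hx
  obtain ⟨K, _, hKcard, b, hbsum, hbvec⟩ :=
    reduce_abs n (Finset.univ : Finset (Fin n ⊕ Fin n)) w a hasum
  -- enlarge K to a set of cardinality exactly n
  obtain ⟨I, hKI, _, hIcard⟩ := Finset.exists_subsuperset_card_eq
    (Finset.subset_univ K) hKcard (by rw [Finset.card_univ, Fintype.card_sum, Fintype.card_fin]; omega)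
  refine Set.mem_iUnion.mpr ⟨I, Set.mem_iUnion.mpr ⟨hIcard, ?_⟩⟩
  refine ⟨fun j => if j ∈ K then b j else 0, ?_, ?_⟩
  · calc ∑ j ∈ I, |if j ∈ K then b j else 0| = ∑ j ∈ K, |b j| := by
          rw [← Finset.sum_subset hKI (fun j _ hjK => by simp [hjK])]
          exact Finset.sum_congr rfl fun j hj => by simp [hj]
        _ ≤ 1 := hbsum
  · rw [hrep, ← hbvec,
      ← Finset.sum_subset hKI (fun j _ hjK => by simp [hjK])]
    exact (Finset.sum_congr rfl fun j hj => by simp [hj]).symm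
end
end

section
/- There exist universal constants C₀, c > 0 such that the following holds. Let n ≥ 3 be an integer, ρ ≥ 1, and let s be an integer with 1 ≤ s ≤ n. Set m := n³, ε := (ρ n²)^{−1}, L := C₀·√((n/s)·log(nρ)), and let U_ε := { u ∈ (εℤ)^m : |supp(u)| ≤ n and ‖u‖₂² ≤ 1/s }. Let Γ be an n×m random matrix with independent N(0,1) entries. Then ℙ( ∃ u ∈ U_ε : ‖Γu‖₂ > L ) ≤ exp(−c·n·log(nρ)). -/
open MeasureTheory ProbabilityTheory Matrix
open scoped ENNReal NNReal Pointwise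

noncomputable section

instance inst_s7 (d : ℕ) : IsProbabilityMeasure (gaussianPi d) := by
  unfold gaussianPi; infer_instance

section Aux

open Real Finset

lemma integral_exp_rquadratic {b : ℝ} (hb : b < 0) (c d : ℝ) :
    ∫ x : ℝ, Real.exp (b * x ^ 2 + c * x + d)
      = Real.sqrt (π / (-b)) * Real.exp (d - c ^ 2 / (4 * b)) := by
  have hb' : (b : ℂ).re < 0 := by simpa using hb
  have h := integral_cexp_quadratic hb' (c : ℂ) (d : ℂ)
  have h1 : ∫ x : ℝ, Complex.exp ((b : ℂ) * x ^ 2 + c * x + d)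
      = ((∫ x : ℝ, Real.exp (b * x ^ 2 + c * x + d) : ℝ) : ℂ) := by
    calc ∫ x : ℝ, Complex.exp ((b : ℂ) * x ^ 2 + c * x + d)
        = ∫ x : ℝ, ((Real.exp (b * x ^ 2 + c * x + d) : ℝ) : ℂ) := by
          congr 1 with x
          norm_cast
      _ = ((∫ x : ℝ, Real.exp (b * x ^ 2 + c * x + d) : ℝ) : ℂ) := integral_ofReal
  have h2 : ((π : ℂ) / -(b:ℂ)) ^ (1 / 2 : ℂ) * Complex.exp ((d : ℂ) - (c:ℂ) ^ 2 / (4 * b))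
      = ((Real.sqrt (π / (-b)) * Real.exp (d - c ^ 2 / (4 * b)) : ℝ) : ℂ) := by
    have hpos : (0:ℝ) ≤ π / (-b) := div_nonneg pi_pos.le (by linarith)
    rw [Real.sqrt_eq_rpow]
    push_cast [Complex.ofReal_exp, Complex.ofReal_cpow hpos]
    norm_num
  rw [h1, h2] at h
  exact_mod_cast h

lemma integrable_exp_rquadratic {b : ℝ} (hb : b < 0) (c d : ℝ) :
    Integrable (fun x : ℝ => Real.exp (b * x ^ 2 + c * x + d)) := by
  have hb' : (b : ℂ).re < 0 := by simpa using hb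
  have h := (integrable_cexp_quadratic' hb' (c : ℂ) (d : ℂ)).re
  refine h.congr (Filter.Eventually.of_forall fun x => ?_)
  have : ((b:ℂ) * (x:ℂ) ^ 2 + (c:ℂ) * (x:ℂ) + (d:ℂ)) = ((b * x ^ 2 + c * x + d : ℝ) : ℂ) := by
    push_cast; ring
  show (Complex.exp _).re = _
  rw [this, Complex.exp_ofReal_re]

lemma lintegral_exp_sq_gaussian {a w l : ℝ} (h : 2 * l * a ^ 2 < 1) :
    ∫⁻ x, ENNReal.ofReal (Real.exp (l * (a * x + w) ^ 2)) ∂(gaussianReal 0 1)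
      = ENNReal.ofReal ((Real.sqrt (1 - 2*l*a^2))⁻¹ * Real.exp (l * w^2 / (1 - 2*l*a^2))) := by
  set A : ℝ := 1 - 2*l*a^2 with hA
  have hA0 : 0 < A := by simp only [hA]; linarith
  set b : ℝ := l * a^2 - 1/2 with hbdef
  have hb : b < 0 := by simp only [hbdef]; linarith
  have hAb : A = -2 * b := by simp only [hA, hbdef]; ring
  have hbne : b ≠ 0 := hb.ne
  have key : ∀ x : ℝ, gaussianPDFReal 0 1 x * Real.exp (l * (a * x + w) ^ 2)
      = (Real.sqrt (2 * π))⁻¹ * Real.exp (b * x^2 + (2*l*a*w) * x + l * w^2) := by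
    intro x
    simp only [gaussianPDFReal, NNReal.coe_one, mul_one, sub_zero]
    rw [mul_assoc, ← Real.exp_add]
    congr 2
    simp only [hbdef]; ring
  rw [gaussianReal_of_var_ne_zero 0 one_ne_zero,
    lintegral_withDensity_eq_lintegral_mul _ (measurable_gaussianPDF 0 1)
      (by fun_prop : Measurable fun x : ℝ => ENNReal.ofReal (Real.exp (l * (a * x + w) ^ 2)))]
  have step1 : ∀ x : ℝ, (gaussianPDF 0 1 * fun x => ENNReal.ofReal (Real.exp (l * (a * x + w) ^ 2))) x
      = ENNReal.ofReal (gaussianPDFReal 0 1 x * Real.exp (l * (a * x + w) ^ 2)) := by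
    intro x
    simp only [Pi.mul_apply, gaussianPDF]
    rw [← ENNReal.ofReal_mul (gaussianPDFReal_nonneg 0 1 x)]
  simp only [step1, key]
  rw [← ofReal_integral_eq_lintegral_ofReal]
  · rw [integral_const_mul, integral_exp_rquadratic hb]
    congr 1
    have h1 : π / (-b) = 2 * π / A := by
      rw [hAb]; field_simp
    have h2 : Real.sqrt (2 * π) ≠ 0 := by positivity
    have h3 : (Real.sqrt (2 * π))⁻¹ * Real.sqrt (π / (-b)) = (Real.sqrt A)⁻¹ := by
      rw [h1, Real.sqrt_div (by positivity) A]
      rw [div_eq_mul_inv, ← mul_assoc, inv_mul_cancel₀ h2, one_mul]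
    have h4 : l * w^2 - (2*l*a*w)^2/(4*b) = l * w^2 / A := by
      rw [hAb]; field_simp; ring
    rw [← mul_assoc, h3, h4]
  · exact (integrable_exp_rquadratic hb _ _).const_mul _
  · filter_upwards with x
    positivity

lemma lintegral_exp_sq_gaussianPi : ∀ (k : ℕ) (u : Fin k → ℝ) (l w : ℝ), 0 ≤ l →
    2 * l * (∑ j, u j ^ 2) < 1 →
    ∫⁻ x, ENNReal.ofReal (Real.exp (l * (w + ∑ j, u j * x j) ^ 2)) ∂(gaussianPi k)
      = ENNReal.ofReal ((Real.sqrt (1 - 2*l*(∑ j, u j ^ 2)))⁻¹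
          * Real.exp (l * w ^ 2 / (1 - 2*l*(∑ j, u j ^ 2)))) := by
  intro k
  induction k with
  | zero =>
    intro u l w _ h
    rw [show gaussianPi 0 = Measure.dirac (isEmptyElim) from Measure.pi_of_empty _]
    rw [lintegral_dirac]
    simp
  | succ k IH =>
    intro u l w hl h
    set σ' : ℝ := ∑ j, u (Fin.succ j) ^ 2 with hσ'
    have hσ'0 : 0 ≤ σ' := Finset.sum_nonneg fun j _ => sq_nonneg _
    have hsum : ∑ j, u j ^ 2 = u 0 ^ 2 + σ' := by rw [hσ', Fin.sum_univ_succ]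
    have h2 : 2 * l * u 0 ^ 2 + 2 * l * σ' < 1 := by rw [hsum] at h; nlinarith
    have hlu0 : 0 ≤ 2 * l * u 0 ^ 2 := by positivity
    have hA'0 : (0:ℝ) < 1 - 2 * l * σ' := by linarith
    set A' : ℝ := 1 - 2 * l * σ' with hA'
    have mp := measurePreserving_piFinSuccAbove (fun _ : Fin (k+1) => gaussianReal 0 1) 0
    set F : ℝ × (Fin k → ℝ) → ENNReal := fun p =>
      ENNReal.ofReal (Real.exp (l * ((w + u 0 * p.1) + ∑ j, u (Fin.succ j) * p.2 j) ^ 2)) with hF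
    have hFmeas : Measurable F := by fun_prop
    have step1 : ∫⁻ x, ENNReal.ofReal (Real.exp (l * (w + ∑ j, u j * x j) ^ 2)) ∂(gaussianPi (k+1))
        = ∫⁻ p, F p ∂((gaussianReal 0 1).prod (gaussianPi k)) := by
      unfold gaussianPi
      rw [← mp.lintegral_comp hFmeas]
      congr 1 with g
      have he : (MeasurableEquiv.piFinSuccAbove (fun _ : Fin (k+1) => ℝ) 0) g
          = (g 0, fun j => g (Fin.succ j)) := rfl
      rw [he]
      simp only [hF]
      congr 3
      rw [Fin.sum_univ_succ]
      ring
    rw [step1, lintegral_prod F hFmeas.aemeasurable]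
    have inner : ∀ y : ℝ, ∫⁻ x, F (y, x) ∂(gaussianPi k)
        = ENNReal.ofReal ((Real.sqrt A')⁻¹ * Real.exp (l * (w + u 0 * y) ^ 2 / A')) := by
      intro y
      exact IH (fun j => u (Fin.succ j)) l (w + u 0 * y) hl (by rw [← hσ']; linarith)
    simp only [inner]
    have split : ∀ y : ℝ, ENNReal.ofReal ((Real.sqrt A')⁻¹ * Real.exp (l * (w + u 0 * y) ^ 2 / A'))
        = ENNReal.ofReal (Real.sqrt A')⁻¹ * ENNReal.ofReal (Real.exp ((l / A') * (u 0 * y + w) ^ 2)) := by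
      intro y
      rw [ENNReal.ofReal_mul (by positivity)]
      congr 2
      ring
    simp only [split]
    rw [lintegral_const_mul _ (by fun_prop)]
    have hcond : 2 * (l / A') * u 0 ^ 2 < 1 := by
      have e : 2 * (l / A') * u 0 ^ 2 = (2 * l * u 0 ^ 2) / A' := by ring
      rw [e, div_lt_one hA'0]; linarith
    rw [lintegral_exp_sq_gaussian (a := u 0) (l := l / A') (w := w) hcond]
    set B : ℝ := 1 - 2 * (l / A') * u 0 ^ 2 with hB
    have hB0 : 0 < B := by rw [hB]; linarith
    have hAB : 1 - 2 * l * (∑ j, u j ^ 2) = A' * B := by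
      rw [hB, hsum]; field_simp; ring
    rw [← ENNReal.ofReal_mul (by positivity), hAB]
    congr 1
    have e1 : (Real.sqrt A')⁻¹ * (Real.sqrt B)⁻¹ = (Real.sqrt (A' * B))⁻¹ := by
      rw [Real.sqrt_mul hA'0.le, mul_inv]
    have e2 : (l / A') * w ^ 2 / B = l * w ^ 2 / (A' * B) := by
      field_simp
    rw [← mul_assoc, e1, e2]

lemma lintegral_pi_prod {α : Type*} [MeasurableSpace α] (μ : Measure α) [IsProbabilityMeasure μ]
    (F : α → ℝ≥0∞) (hF : Measurable F) :
    ∀ k : ℕ, ∫⁻ g, ∏ i, F (g i) ∂(Measure.pi fun _ : Fin k => μ) = (∫⁻ x, F x ∂μ) ^ k := by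
  intro k
  induction k with
  | zero => simp
  | succ k IH =>
    have mp := measurePreserving_piFinSuccAbove (fun _ : Fin (k+1) => μ) 0
    have hG : Measurable fun p : α × (Fin k → α) => F p.1 * ∏ j, F (p.2 j) := by
      apply Measurable.mul (hF.comp measurable_fst)
      exact Finset.measurable_prod _ fun j _ => hF.comp ((measurable_pi_apply j).comp measurable_snd)
    have step : ∫⁻ g, ∏ i, F (g i) ∂(Measure.pi fun _ : Fin (k+1) => μ)
        = ∫⁻ p, F p.1 * ∏ j, F (p.2 j) ∂(μ.prod (Measure.pi fun _ : Fin k => μ)) := by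
      rw [← mp.lintegral_comp hG]
      congr 1 with g
      have he : (MeasurableEquiv.piFinSuccAbove (fun _ : Fin (k+1) => α) 0) g
          = (g 0, fun j => g (Fin.succ j)) := rfl
      rw [he]
      exact Fin.prod_univ_succ fun i => F (g i)
    rw [step, lintegral_prod_mul (f := F) (g := fun x : Fin k → α => ∏ j, F (x j))
      hF.aemeasurable
      (Finset.measurable_prod _ fun j _ => hF.comp (measurable_pi_apply j)).aemeasurable, IH,
      pow_succ, mul_comm]

lemma chernoff_row_bound (n m : ℕ) (u : Fin m → ℝ) (l : ℝ) (hl : 0 ≤ l)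
    (hvar : 2 * l * (∑ j, u j ^ 2) < 1) (L : ℝ) (hL : 0 ≤ L) :
    gaussianMatrix n m {g | L < Real.sqrt (∑ i, ((Matrix.of g).mulVec u i) ^ 2)}
      ≤ ENNReal.ofReal (((Real.sqrt (1 - 2*l*(∑ j, u j ^ 2)))⁻¹) ^ n * Real.exp (-(l * L ^ 2))) := by
  classical
  set A : ℝ := 1 - 2*l*(∑ j, u j ^ 2) with hA
  have hA0 : 0 < A := by
    have : 0 ≤ 2 * l * (∑ j, u j ^ 2) :=
      mul_nonneg (by positivity) (Finset.sum_nonneg fun j _ => sq_nonneg _)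
    linarith
  set F : (Fin m → ℝ) → ℝ≥0∞ := fun y => ENNReal.ofReal (Real.exp (l * (0 + ∑ j, u j * y j) ^ 2))
    with hFdef
  have hFmeas : Measurable F := by fun_prop
  set f : (Fin n → Fin m → ℝ) → ℝ≥0∞ := fun g => ∏ i, F (g i) with hfdef
  have hfmeas : Measurable f :=
    Finset.measurable_prod _ fun i _ => hFmeas.comp (measurable_pi_apply i)
  have hsub : {g : Fin n → Fin m → ℝ | L < Real.sqrt (∑ i, ((Matrix.of g).mulVec u i) ^ 2)}
      ⊆ {g | ENNReal.ofReal (Real.exp (l * L ^ 2)) ≤ f g} := by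
    intro g hg
    simp only [Set.mem_setOf_eq] at hg ⊢
    have hS : L ^ 2 < ∑ i, ((Matrix.of g).mulVec u i) ^ 2 := by
      have := (Real.lt_sqrt hL).mp hg
      linarith
    have hf : f g = ENNReal.ofReal (Real.exp (l * ∑ i, ((Matrix.of g).mulVec u i) ^ 2)) := by
      have hmv : ∀ i, (Matrix.of g).mulVec u i = ∑ j, u j * g i j := fun i => by
        simp [Matrix.mulVec, dotProduct, mul_comm]
      rw [hfdef]
      simp only [hFdef, zero_add, hmv]
      rw [← ENNReal.ofReal_prod_of_nonneg (fun i _ => (Real.exp_pos _).le), ← Real.exp_sum,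
        ← Finset.mul_sum]
    rw [hf]
    apply ENNReal.ofReal_le_ofReal
    apply Real.exp_le_exp.mpr
    nlinarith
  have markov := mul_meas_ge_le_lintegral₀ (μ := gaussianMatrix n m) hfmeas.aemeasurable
    (ENNReal.ofReal (Real.exp (l * L ^ 2)))
  have hint : ∫⁻ g, f g ∂(gaussianMatrix n m) = (ENNReal.ofReal ((Real.sqrt A)⁻¹)) ^ n := by
    rw [hfdef]
    have := lintegral_pi_prod (gaussianPi m) F hFmeas n
    rw [show gaussianMatrix n m = Measure.pi fun _ : Fin n => gaussianPi m from rfl, this]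
    rw [hFdef, lintegral_exp_sq_gaussianPi m u l 0 hl hvar]
    norm_num
    rfl
  have h1 : gaussianMatrix n m {g | L < Real.sqrt (∑ i, ((Matrix.of g).mulVec u i) ^ 2)}
      ≤ gaussianMatrix n m {g | ENNReal.ofReal (Real.exp (l * L ^ 2)) ≤ f g} := measure_mono hsub
  have hexp_ne : ENNReal.ofReal (Real.exp (l * L ^ 2)) ≠ 0 := by
    simp [ENNReal.ofReal_eq_zero, not_le, Real.exp_pos]
  have h2 : gaussianMatrix n m {g | ENNReal.ofReal (Real.exp (l * L ^ 2)) ≤ f g}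
      ≤ (ENNReal.ofReal ((Real.sqrt A)⁻¹)) ^ n / ENNReal.ofReal (Real.exp (l * L ^ 2)) := by
    rw [ENNReal.le_div_iff_mul_le (Or.inl hexp_ne) (Or.inl ENNReal.ofReal_ne_top)]
    rw [mul_comm]
    calc ENNReal.ofReal (Real.exp (l * L ^ 2))
          * gaussianMatrix n m {g | ENNReal.ofReal (Real.exp (l * L ^ 2)) ≤ f g}
        ≤ ∫⁻ g, f g ∂(gaussianMatrix n m) := markov
      _ = _ := hint
  refine (h1.trans h2).trans ?_
  rw [← ENNReal.ofReal_pow (by positivity), ← ENNReal.ofReal_div_of_pos (Real.exp_pos _)]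
  apply ENNReal.ofReal_le_ofReal
  rw [Real.exp_neg, div_eq_mul_inv]

lemma card_sparse_bound (m n : ℕ) (R : ℤ) (T : Finset (Fin m → ℤ))
    (hT : ∀ z ∈ T, (∀ j, z j ∈ Finset.Icc (-R) R) ∧ (univ.filter fun j => z j ≠ 0).card ≤ n) :
    T.card ≤ (1 + m * (Finset.Icc (-R) R).card) ^ n := by
  classical
  set supp : (Fin m → ℤ) → Finset (Fin m) := fun z => univ.filter fun j => z j ≠ 0 with hsupp
  set Φ : (Fin m → ℤ) → (Fin n → Option (Fin m × ℤ)) := fun z i =>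
    if h : (i : ℕ) < (supp z).card
    then some ((supp z).orderEmbOfFin rfl ⟨i, h⟩, z ((supp z).orderEmbOfFin rfl ⟨i, h⟩))
    else none with hΦ
  set Tgt : Finset (Fin n → Option (Fin m × ℤ)) :=
    Fintype.piFinset fun _ => insert none (((univ : Finset (Fin m)) ×ˢ Finset.Icc (-R) R).image some)
    with hTgt
  have hmaps : ∀ z ∈ T, Φ z ∈ Tgt := by
    intro z hz
    rw [hTgt, Fintype.mem_piFinset]
    intro i
    simp only [hΦ]
    by_cases h : (i : ℕ) < (supp z).card
    · rw [dif_pos h]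
      apply Finset.mem_insert_of_mem
      apply Finset.mem_image_of_mem
      rw [Finset.mem_product]
      exact ⟨Finset.mem_univ _, (hT z hz).1 _⟩
    · rw [dif_neg h]; exact Finset.mem_insert_self _ _
  have key : ∀ z₁ z₂ : Fin m → ℤ, z₁ ∈ T → z₂ ∈ T → Φ z₁ = Φ z₂ →
      ∀ j, z₁ j ≠ 0 → z₁ j = z₂ j := by
    intro z₁ z₂ hz₁ hz₂ heq j hj
    have hjmem : j ∈ supp z₁ := by rw [hsupp]; simp [hj]
    have : j ∈ Set.range ((supp z₁).orderEmbOfFin rfl) := by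
      rw [Finset.range_orderEmbOfFin]; exact_mod_cast hjmem
    obtain ⟨i, hi⟩ := this
    have hilt : (i : ℕ) < n := lt_of_lt_of_le i.2 (hT z₁ hz₁).2
    have h1 : Φ z₁ ⟨i, hilt⟩ = some (j, z₁ j) := by
      simp only [hΦ]
      rw [dif_pos (show ((⟨(i : ℕ), hilt⟩ : Fin n) : ℕ) < (supp z₁).card from i.2)]
      simp only [Fin.eta, hi]
    have h2 : Φ z₂ ⟨i, hilt⟩ = some (j, z₁ j) := by rw [← heq]; exact h1
    simp only [hΦ] at h2
    by_cases h : ((⟨(i : ℕ), hilt⟩ : Fin n) : ℕ) < (supp z₂).card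
    · rw [dif_pos h] at h2
      have hp := Option.some_injective _ h2
      have hfst : (supp z₂).orderEmbOfFin rfl ⟨_, h⟩ = j := congrArg Prod.fst hp
      have hsnd := congrArg Prod.snd hp
      simp only at hsnd
      rw [hfst] at hsnd
      exact hsnd.symm
    · rw [dif_neg h] at h2; exact absurd h2 (by simp)
  have hinj : Set.InjOn Φ T := by
    intro z₁ hz₁ z₂ hz₂ heq
    funext j
    by_cases h1 : z₁ j ≠ 0
    · exact key z₁ z₂ hz₁ hz₂ heq j h1
    · by_cases h2 : z₂ j ≠ 0
      · exact (key z₂ z₁ hz₂ hz₁ heq.symm j h2).symm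
      · push_neg at h1 h2; rw [h1, h2]
  have hcard := Finset.card_le_card_of_injOn Φ hmaps hinj
  refine hcard.trans ?_
  rw [hTgt, Fintype.card_piFinset]
  calc ∏ _i : Fin n, (insert none (((univ : Finset (Fin m)) ×ˢ Finset.Icc (-R) R).image some)).card
      ≤ ∏ _i : Fin n, (1 + m * (Finset.Icc (-R) R).card) := by
        apply Finset.prod_le_prod'
        intro i _
        calc (insert none (((univ : Finset (Fin m)) ×ˢ Finset.Icc (-R) R).image some)).card
            ≤ (((univ : Finset (Fin m)) ×ˢ Finset.Icc (-R) R).image some).card + 1 :=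
              Finset.card_insert_le _ _
          _ ≤ ((univ : Finset (Fin m)) ×ˢ Finset.Icc (-R) R).card + 1 :=
              Nat.add_le_add_right (Finset.card_image_le) 1
          _ = 1 + m * (Finset.Icc (-R) R).card := by
              rw [Finset.card_product, Finset.card_univ, Fintype.card_fin, Nat.add_comm]
    _ = (1 + m * (Finset.Icc (-R) R).card) ^ n := by
        rw [Finset.prod_const, Finset.card_univ, Fintype.card_fin]

end Aux

set_option maxHeartbeats 2000000 in
/-- global `U`-norm event. With `m = n³`, `ε = (ρn²)⁻¹` and
`L = C₀√((n/s)·log(nρ))`, the probability that some `u` in the discrete class `U_ε` has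
`‖Γu‖₂ > L` is at most `exp(−c·n·log(nρ))`. -/
theorem global_U_norm_event :
    ∃ C₀ c : ℝ, 0 < C₀ ∧ 0 < c ∧
      ∀ (n s : ℕ) (ρ : ℝ), 3 ≤ n → 1 ≤ ρ → 1 ≤ s → s ≤ n →
      let m := n ^ 3
      let ε : ℝ := (ρ * (n : ℝ) ^ 2)⁻¹
      let L : ℝ := C₀ * Real.sqrt (((n : ℝ) / s) * Real.log (n * ρ))
      let Uε : Set (Fin m → ℝ) :=
        {u | (∀ j, ∃ z : ℤ, u j = ε * z) ∧ {j | u j ≠ 0}.ncard ≤ n ∧ ∑ j, u j ^ 2 ≤ 1 / (s : ℝ)}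
      gaussianMatrix n m {g | ∃ u ∈ Uε, L < Real.sqrt (∑ i, ((Matrix.of g).mulVec u i) ^ 2)} ≤
        ENNReal.ofReal (Real.exp (-(c * n * Real.log (n * ρ)))) := by
  classical
  refine ⟨8, 1, by norm_num, by norm_num, ?_⟩
  intro n s ρ hn hρ hs hsn
  intro m ε L Uε
  -- basic positivity facts
  have hn3 : (3:ℝ) ≤ (n:ℝ) := by exact_mod_cast hn
  have hs1 : (1:ℝ) ≤ (s:ℝ) := by exact_mod_cast hs
  have hs0 : (0:ℝ) < (s:ℝ) := by linarith
  have hρ0 : (0:ℝ) < ρ := by linarith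
  have hnρ3 : (3:ℝ) ≤ (n:ℝ) * ρ := by nlinarith
  have hnρ0 : (0:ℝ) < (n:ℝ) * ρ := by linarith
  have hlog1 : 1 ≤ Real.log ((n:ℝ) * ρ) := by
    rw [Real.le_log_iff_exp_le hnρ0]
    calc Real.exp 1 ≤ 2.7182818286 := Real.exp_one_lt_d9.le
      _ ≤ 3 := by norm_num
      _ ≤ (n:ℝ) * ρ := hnρ3
  have hlog0 : 0 ≤ Real.log ((n:ℝ) * ρ) := by linarith
  set lg : ℝ := Real.log ((n:ℝ) * ρ) with hlg
  have hε : ε = (ρ * (n : ℝ) ^ 2)⁻¹ := rfl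
  have hρn2 : (0:ℝ) < ρ * (n:ℝ)^2 := by nlinarith
  have hε0 : (0:ℝ) < ε := by rw [hε]; positivity
  have hL : L = 8 * Real.sqrt (((n : ℝ) / s) * lg) := rfl
  have hL0 : 0 ≤ L := by rw [hL]; positivity
  have hX0 : 0 ≤ ((n : ℝ) / s) * lg := by positivity
  have hL2 : L ^ 2 = 64 * (((n : ℝ) / s) * lg) := by
    rw [hL, mul_pow, Real.sq_sqrt hX0]; norm_num
  set lam : ℝ := (s:ℝ) / 4 with hlam
  have hlam0 : 0 ≤ lam := by positivity
  have hlamL2 : lam * L ^ 2 = 16 * (n:ℝ) * lg := by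
    rw [hL2, hlam]; field_simp; ring
  -- the lattice set
  set R : ℤ := ⌈ρ * (n:ℝ)^2⌉ with hR
  have hR1 : (1:ℤ) ≤ R := by
    have h1 : (1:ℝ) ≤ ρ * (n:ℝ)^2 := by nlinarith
    have h2 : (1:ℝ) ≤ (R:ℝ) := h1.trans (Int.le_ceil _)
    exact_mod_cast h2
  have hRr : (R:ℝ) ≥ ρ * (n:ℝ)^2 := Int.le_ceil _
  have hRup : (R:ℝ) < ρ * (n:ℝ)^2 + 1 := Int.ceil_lt_add_one _
  set T : Finset (Fin m → ℤ) :=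
    (Fintype.piFinset fun _ : Fin m => Finset.Icc (-R) R).filter
      (fun z => (Finset.univ.filter fun j => z j ≠ 0).card ≤ n
        ∧ ∑ j, (ε * (z j : ℝ)) ^ 2 ≤ 1 / (s:ℝ)) with hT
  set S : Finset (Fin m → ℝ) := T.image (fun z j => ε * (z j : ℝ)) with hS
  -- event inclusion
  have hsub : {g : Fin n → Fin m → ℝ | ∃ u ∈ Uε, L < Real.sqrt (∑ i, ((Matrix.of g).mulVec u i) ^ 2)}
      ⊆ ⋃ v ∈ S, {g | L < Real.sqrt (∑ i, ((Matrix.of g).mulVec v i) ^ 2)} := by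
    intro g hg
    obtain ⟨u, ⟨hz, hsupp, hnorm⟩, hgu⟩ := hg
    set z : Fin m → ℤ := fun j => Classical.choose (hz j) with hzdef
    have hzspec : ∀ j, u j = ε * (z j : ℝ) := fun j => Classical.choose_spec (hz j)
    have hueq : u = fun j => ε * (z j : ℝ) := funext hzspec
    have husq : ∀ j, (u j) ^ 2 ≤ 1 := by
      intro j
      have h1 : (u j) ^ 2 ≤ ∑ j', (u j') ^ 2 :=
        Finset.single_le_sum (f := fun j' => (u j') ^ 2) (fun j' _ => sq_nonneg _)
          (Finset.mem_univ j)
      have h2 : 1 / (s:ℝ) ≤ 1 := by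
        rw [div_le_one hs0]; exact hs1
      linarith
    have hzmem : ∀ j, z j ∈ Finset.Icc (-R) R := by
      intro j
      have habs : |u j| ≤ 1 := by
        have := husq j
        nlinarith [abs_nonneg (u j), sq_abs (u j)]
      have : ε * |(z j : ℝ)| ≤ 1 := by
        rw [← abs_of_pos hε0, ← abs_mul, ← hzspec j]; exact habs
      have hzr : |(z j : ℝ)| ≤ ρ * (n:ℝ)^2 := by
        rw [hε] at this
        calc |(z j : ℝ)| = (ρ * (n:ℝ)^2) * ((ρ * (n:ℝ)^2)⁻¹ * |(z j : ℝ)|) := by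
              field_simp
          _ ≤ (ρ * (n:ℝ)^2) * 1 := by
              apply mul_le_mul_of_nonneg_left this hρn2.le
          _ = ρ * (n:ℝ)^2 := mul_one _
      have hzR : |(z j : ℝ)| ≤ (R:ℝ) := hzr.trans hRr
      rw [Finset.mem_Icc, ← abs_le]
      exact_mod_cast hzR
    have hzsupp : (Finset.univ.filter fun j => z j ≠ 0).card ≤ n := by
      have hset : {j | u j ≠ 0} = {j | z j ≠ 0} := by
        ext j
        simp only [Set.mem_setOf_eq, hzspec j]
        constructor
        · intro h hc; apply h; rw [hc]; simp
        · intro h hc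
          apply h
          have := mul_eq_zero.mp hc
          rcases this with h' | h'
          · exact absurd h' hε0.ne'
          · exact_mod_cast h'
      have : {j | z j ≠ 0}.ncard ≤ n := by rw [← hset]; exact hsupp
      rwa [Set.ncard_eq_toFinset_card', Set.toFinset_setOf] at this
    have hznorm : ∑ j, (ε * (z j : ℝ)) ^ 2 ≤ 1 / (s:ℝ) := by
      have he : ∑ j, (ε * (z j : ℝ)) ^ 2 = ∑ j, (u j) ^ 2 := by
        apply Finset.sum_congr rfl
        intro j _
        rw [hzspec j]
      rw [he]
      exact hnorm
    have hzT : z ∈ T := by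
      rw [hT, Finset.mem_filter, Fintype.mem_piFinset]
      exact ⟨fun j => hzmem j, hzsupp, hznorm⟩
    have huS : u ∈ S := by
      rw [hS, Finset.mem_image]
      exact ⟨z, hzT, hueq.symm⟩
    exact Set.mem_biUnion huS hgu
  -- per-vector bound
  have perV : ∀ v ∈ S, gaussianMatrix n m {g | L < Real.sqrt (∑ i, ((Matrix.of g).mulVec v i) ^ 2)}
      ≤ ENNReal.ofReal (Real.sqrt 2 ^ n * Real.exp (-(lam * L ^ 2))) := by
    intro v hv
    rw [hS, Finset.mem_image] at hv
    obtain ⟨z, hzT, rfl⟩ := hv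
    rw [hT, Finset.mem_filter] at hzT
    obtain ⟨-, -, hvnorm⟩ := hzT
    have hsum0 : 0 ≤ ∑ j, (ε * (z j : ℝ)) ^ 2 := Finset.sum_nonneg fun j _ => sq_nonneg _
    have hvar : 2 * lam * (∑ j, (ε * (z j : ℝ)) ^ 2) ≤ 1/2 := by
      calc 2 * lam * (∑ j, (ε * (z j : ℝ)) ^ 2) ≤ 2 * lam * (1 / (s:ℝ)) := by
            apply mul_le_mul_of_nonneg_left hvnorm (by positivity)
        _ = 1/2 := by rw [hlam]; field_simp; ring
    have hvar' : 2 * lam * (∑ j, (ε * (z j : ℝ)) ^ 2) < 1 := by linarith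
    refine (chernoff_row_bound n m _ lam hlam0 hvar' L hL0).trans ?_
    apply ENNReal.ofReal_le_ofReal
    apply mul_le_mul_of_nonneg_right _ (Real.exp_pos _).le
    apply pow_le_pow_left₀ (by positivity)
    have h12 : (1:ℝ)/2 ≤ 1 - 2 * lam * (∑ j, (ε * (z j : ℝ)) ^ 2) := by linarith
    have hsq : Real.sqrt (1/2) ≤ Real.sqrt (1 - 2 * lam * (∑ j, (ε * (z j : ℝ)) ^ 2)) :=
      Real.sqrt_le_sqrt h12
    have hs2 : (0:ℝ) < Real.sqrt (1/2) := by positivity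
    calc (Real.sqrt (1 - 2 * lam * (∑ j, (ε * (z j : ℝ)) ^ 2)))⁻¹
        ≤ (Real.sqrt (1/2))⁻¹ := by
          apply inv_anti₀ hs2 hsq
      _ = Real.sqrt 2 := by
          rw [show (1:ℝ)/2 = 2⁻¹ by norm_num, Real.sqrt_inv, inv_inv]
  -- cardinality bound
  have hcardT : T.card ≤ (1 + m * (Finset.Icc (-R) R).card) ^ n := by
    apply card_sparse_bound
    intro z hz
    rw [hT, Finset.mem_filter, Fintype.mem_piFinset] at hz
    exact ⟨hz.1, hz.2.1⟩
  have hcardS : S.card ≤ (1 + m * (Finset.Icc (-R) R).card) ^ n :=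
    (Finset.card_image_le).trans hcardT
  -- real-number estimate of the base
  have hIcc : ((Finset.Icc (-R) R).card : ℝ) = 2 * (R:ℝ) + 1 := by
    rw [Int.card_Icc]
    have h1 : R + 1 - (-R) = 2*R + 1 := by ring
    rw [h1]
    have h2 : (0:ℤ) ≤ 2*R + 1 := by linarith
    have h3 : (((2*R+1).toNat : ℕ) : ℤ) = 2*R+1 := Int.toNat_of_nonneg h2
    have h4 := congrArg (fun t : ℤ => (t:ℝ)) h3
    push_cast at h4
    linarith [h4]
  have hbase : ((1 + m * (Finset.Icc (-R) R).card : ℕ) : ℝ) ≤ ((n:ℝ) * ρ) ^ (8:ℕ) := by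
    have hm : ((m:ℕ) : ℝ) = (n:ℝ)^3 := by
      show (((n^3 : ℕ)) : ℝ) = (n:ℝ)^3
      push_cast; ring
    push_cast
    rw [hIcc, hm]
    have e1 : 2 * (R:ℝ) + 1 ≤ 5 * ρ * (n:ℝ)^2 := by nlinarith
    have e2 : (1:ℝ) + (n:ℝ)^3 * (2*(R:ℝ)+1) ≤ 1 + (n:ℝ)^3 * (5 * ρ * (n:ℝ)^2) := by nlinarith
    have e3 : (1:ℝ) + (n:ℝ)^3 * (5 * ρ * (n:ℝ)^2) ≤ 6 * ρ * (n:ℝ)^5 := by nlinarith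
    have e4 : 6 * ρ * (n:ℝ)^5 ≤ (n:ℝ)^8 * ρ^8 := by
      have hρ8 : ρ ≤ ρ^8 := by
        calc ρ = ρ^1 := (pow_one ρ).symm
          _ ≤ ρ^8 := pow_le_pow_right₀ hρ (by norm_num)
      have h27 : (27:ℝ) ≤ (n:ℝ)^3 := by nlinarith
      have hn5 : (0:ℝ) ≤ (n:ℝ)^5 := by positivity
      have hstep : 6 * ρ * (n:ℝ)^5 ≤ (n:ℝ)^8 * ρ := by
        nlinarith [mul_le_mul_of_nonneg_right h27 (mul_nonneg hρ0.le hn5)]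
      have hstep2 : (n:ℝ)^8 * ρ ≤ (n:ℝ)^8 * ρ^8 :=
        mul_le_mul_of_nonneg_left hρ8 (by positivity)
      linarith
    calc (1:ℝ) + (n:ℝ)^3 * (2*(R:ℝ)+1) ≤ 6 * ρ * (n:ℝ)^5 := by linarith
      _ ≤ (n:ℝ)^8 * ρ^8 := e4
      _ = ((n:ℝ) * ρ)^(8:ℕ) := by ring
  -- assemble
  set Bd : ℝ≥0∞ := ENNReal.ofReal (Real.sqrt 2 ^ n * Real.exp (-(lam * L ^ 2))) with hBd
  set N : ℕ := (1 + m * (Finset.Icc (-R) R).card) ^ n with hN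
  calc gaussianMatrix n m {g | ∃ u ∈ Uε, L < Real.sqrt (∑ i, ((Matrix.of g).mulVec u i) ^ 2)}
      ≤ gaussianMatrix n m (⋃ v ∈ S, {g | L < Real.sqrt (∑ i, ((Matrix.of g).mulVec v i) ^ 2)}) :=
        measure_mono hsub
    _ ≤ ∑ v ∈ S, gaussianMatrix n m {g | L < Real.sqrt (∑ i, ((Matrix.of g).mulVec v i) ^ 2)} :=
        measure_biUnion_finset_le S _
    _ ≤ S.card • Bd := Finset.sum_le_card_nsmul S _ Bd perV
    _ = (S.card : ℝ≥0∞) * Bd := nsmul_eq_mul _ _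
    _ ≤ (N : ℝ≥0∞) * Bd := by
        apply mul_le_mul_left (by exact_mod_cast hcardS)
    _ ≤ ENNReal.ofReal (Real.exp (-(1 * n * lg))) := by
        rw [hBd, ← ENNReal.ofReal_natCast, ← ENNReal.ofReal_mul (by positivity)]
        apply ENNReal.ofReal_le_ofReal
        have hNr : ((N:ℕ):ℝ) ≤ (((n:ℝ) * ρ) ^ (8:ℕ)) ^ n := by
          rw [hN]
          push_cast
          apply pow_le_pow_left₀ (by positivity)
          exact_mod_cast hbase
        have hnr_exp : ((n:ℝ) * ρ) = Real.exp lg := (Real.exp_log hnρ0).symm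
        have hsqrt2 : Real.sqrt 2 ≤ Real.exp 1 := by
          calc Real.sqrt 2 ≤ 2 := (Real.sqrt_le_left (by norm_num)).mpr (by norm_num)
            _ ≤ Real.exp 1 := by linarith [Real.add_one_le_exp 1]
        calc ((N:ℕ):ℝ) * (Real.sqrt 2 ^ n * Real.exp (-(lam * L ^ 2)))
            ≤ ((((n:ℝ) * ρ) ^ (8:ℕ)) ^ n) * ((Real.exp 1) ^ n * Real.exp (-(lam * L ^ 2))) := by
              gcongr
          _ = Real.exp ((8 * n : ℕ) * lg) * (Real.exp ((n:ℕ) * 1) * Real.exp (-(16 * (n:ℝ) * lg))) := by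
              rw [hlamL2, hnr_exp, ← pow_mul, ← Real.exp_nat_mul, ← Real.exp_nat_mul]
          _ = Real.exp ((8 * n : ℕ) * lg + ((n:ℕ) * 1 + -(16 * (n:ℝ) * lg))) := by
              rw [← Real.exp_add, ← Real.exp_add]
          _ ≤ Real.exp (-(1 * n * lg)) := by
              apply Real.exp_le_exp.mpr
              push_cast
              have hnl : (n:ℝ) * 1 ≤ (n:ℝ) * lg :=
                mul_le_mul_of_nonneg_left hlog1 (by linarith)
              nlinarith [mul_nonneg (show (0:ℝ) ≤ (n:ℝ) by linarith) hlog0]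
end
end

section
/- Let n ≥ 1 and let 1 ≤ p ≤ n be integers with q := n − p. Let y₁,…,y_p, z₁,…,z_q ∈ ℝⁿ be linearly independent and set P := conv{±y₁,…,±y_p, ±z₁,…,±z_q}. Fix an integer 1 ≤ r ≤ p, and for each J ⊆ [p] with |J| = r define the suppressed polytope P_J := conv( {±yᵢ : i ∈ [p]∖J} ∪ {±(r/p)·yᵢ : i ∈ J} ∪ {±z₁,…,±z_q} ). Then for every t > 0: γ_n(t·P) ≤ (2 / binom(p,r)) · Σ_{J ⊆ [p], |J| = r} γ_n(4t·P_J). -/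
open MeasureTheory ProbabilityTheory
open scoped ENNReal NNReal Pointwise

noncomputable section

/-- Standard Gaussian measure on `EuclideanSpace ℝ (Fin d)`. -/
def stdGaussian (d : ℕ) : Measure (EuclideanSpace ℝ (Fin d)) :=
  (Measure.pi fun _ : Fin d => gaussianReal 0 1).map
    (MeasurableEquiv.toLp 2 (Fin d → ℝ))

/-- Number of `r`-subsets of `Fin p` containing a fixed element `i`. -/
lemma count_mem_aux (p r : ℕ) (hr1 : 1 ≤ r) (i : Fin p) :
    ((Finset.powersetCard r (Finset.univ : Finset (Fin p))).filter (fun J => i ∈ J)).card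
      = (p-1).choose (r-1) := by
  classical
  open Finset in
  rw [show (p-1).choose (r-1) = (Finset.powersetCard (r-1) ((univ : Finset (Fin p)).erase i)).card
      from by simp [Finset.card_powersetCard, Finset.card_univ, Finset.card_erase_of_mem]]
  apply Finset.card_bij (fun J _ => J.erase i)
  · rintro J hJ
    simp only [Finset.mem_filter, Finset.mem_powersetCard] at hJ
    simp only [Finset.mem_powersetCard]
    refine ⟨fun x hx => ?_, ?_⟩
    · simp only [Finset.mem_erase] at hx ⊢; exact ⟨hx.1, Finset.mem_univ _⟩
    · rw [Finset.card_erase_of_mem hJ.2, hJ.1.2]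
  · rintro J hJ K hK h
    simp only [Finset.mem_filter] at hJ hK
    rw [← Finset.insert_erase hJ.2, ← Finset.insert_erase hK.2, h]
  · rintro K hK
    simp only [Finset.mem_powersetCard] at hK
    have hiK : i ∉ K := fun h => (Finset.mem_erase.1 (hK.1 h)).1 rfl
    refine ⟨insert i K, ?_, ?_⟩
    · simp only [Finset.mem_filter, Finset.mem_powersetCard]
      refine ⟨⟨fun x _ => Finset.mem_univ _, ?_⟩, Finset.mem_insert_self i K⟩
      rw [Finset.card_insert_of_notMem hiK, hK.2]
      omega
    · rw [Finset.erase_insert hiK]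

/-- Double counting: summing `∑_{i ∈ J} |a i|` over all `r`-subsets `J`. -/
lemma double_count_aux (p r : ℕ) (hr1 : 1 ≤ r) (a : Fin p → ℝ) :
    ∑ J ∈ Finset.powersetCard r (Finset.univ : Finset (Fin p)), ∑ i ∈ J, |a i|
      = ((p-1).choose (r-1) : ℝ) * ∑ i, |a i| := by
  have h1 : ∀ J ∈ Finset.powersetCard r (Finset.univ : Finset (Fin p)),
      ∑ i ∈ J, |a i| = ∑ i : Fin p, if i ∈ J then |a i| else 0 := by
    intro J _
    rw [Finset.sum_ite_mem, Finset.univ_inter]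
  rw [Finset.sum_congr rfl h1, Finset.sum_comm]
  rw [Finset.mul_sum]
  refine Finset.sum_congr rfl fun i _ => ?_
  rw [← Finset.sum_filter, Finset.sum_const, count_mem_aux p r hr1 i]
  simp [mul_comm]

/-- At least half of the `r`-subsets `J` satisfy `∑_{i∈J} |a i| ≤ 2(r/p) ∑ᵢ |a i|`. -/
lemma good_count_aux (p r : ℕ) (hp : 1 ≤ p) (hr1 : 1 ≤ r) (hrp : r ≤ p) (a : Fin p → ℝ) :
    p.choose r ≤ 2 * ((Finset.powersetCard r (Finset.univ : Finset (Fin p))).filter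
      (fun J => ∑ i ∈ J, |a i| ≤ 2 * ((r:ℝ) / p) * ∑ i, |a i|)).card := by
  set S : ℝ := ∑ i, |a i| with hSdef
  have hS0 : 0 ≤ S := Finset.sum_nonneg fun i _ => abs_nonneg _
  set P := Finset.powersetCard r (Finset.univ : Finset (Fin p)) with hP
  have hPcard : P.card = p.choose r := by simp [hP, Finset.card_powersetCard]
  rcases eq_or_lt_of_le hS0 with hS | hS
  · have : P.filter (fun J => ∑ i ∈ J, |a i| ≤ 2 * ((r:ℝ) / p) * S) = P := by
      apply Finset.filter_true_of_mem
      intro J hJ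
      have h1 : ∑ i ∈ J, |a i| ≤ S := by
        apply Finset.sum_le_sum_of_subset_of_nonneg (Finset.subset_univ J)
        intro i _ _; exact abs_nonneg _
      rw [← hS, mul_zero]
      linarith
    rw [this, hPcard]; omega
  · set B := P.filter (fun J => ¬ (∑ i ∈ J, |a i| ≤ 2 * ((r:ℝ) / p) * S)) with hB
    have hkey : (B.card : ℝ) * (2 * ((r:ℝ) / p) * S) ≤ ((p-1).choose (r-1) : ℝ) * S := by
      calc (B.card : ℝ) * (2 * ((r:ℝ) / p) * S)
          ≤ ∑ J ∈ B, ∑ i ∈ J, |a i| := by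
            rw [← nsmul_eq_mul]
            apply Finset.card_nsmul_le_sum
            intro J hJ
            simp only [hB, Finset.mem_filter, not_le] at hJ
            exact hJ.2.le
        _ ≤ ∑ J ∈ P, ∑ i ∈ J, |a i| := by
            apply Finset.sum_le_sum_of_subset_of_nonneg (Finset.filter_subset _ _)
            intro J _ _
            exact Finset.sum_nonneg fun i _ => abs_nonneg _
        _ = ((p-1).choose (r-1) : ℝ) * S := double_count_aux p r hr1 a
    have hid : p * (p-1).choose (r-1) = r * p.choose r := by
      obtain ⟨p', rfl⟩ : ∃ p', p = p' + 1 := ⟨p - 1, by omega⟩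
      obtain ⟨r', rfl⟩ : ∃ r', r = r' + 1 := ⟨r - 1, by omega⟩
      simp only [Nat.succ_sub_one, Nat.add_sub_cancel]
      rw [show p'+1 = Nat.succ p' from rfl, Nat.add_one_mul_choose_eq, Nat.mul_comm]
    have hp' : (0:ℝ) < p := by exact_mod_cast hp
    have hr' : (0:ℝ) < r := by exact_mod_cast hr1
    have h2 : 2 * (B.card : ℝ) ≤ (p.choose r : ℝ) := by
      have h3 : (B.card : ℝ) * (2 * ((r:ℝ) / p)) ≤ ((p-1).choose (r-1) : ℝ) :=
        le_of_mul_le_mul_right (by ring_nf; ring_nf at hkey; linarith) hS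
      have h4 : ((p:ℝ)) * ((p-1).choose (r-1) : ℝ) = (r:ℝ) * (p.choose r : ℝ) := by
        exact_mod_cast hid
      have h5 : (B.card : ℝ) * (2 * (r:ℝ)) ≤ (p:ℝ) * ((p-1).choose (r-1) : ℝ) := by
        calc (B.card : ℝ) * (2 * (r:ℝ)) = ((B.card : ℝ) * (2 * ((r:ℝ)/p))) * p := by
              field_simp
          _ ≤ ((p-1).choose (r-1) : ℝ) * p := by
              apply mul_le_mul_of_nonneg_right h3 hp'.le
          _ = _ := by ring
      rw [h4] at h5
      nlinarith
    have h6 : 2 * B.card ≤ p.choose r := by exact_mod_cast h2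
    have h7 := Finset.card_filter_add_card_filter_not (s := P)
      (p := fun J => ∑ i ∈ J, |a i| ≤ 2 * ((r:ℝ) / p) * S)
    rw [hPcard, ← hB] at h7
    omega

/-- If `x ∈ t·P` with coefficients `c` and `J` is a "good" subset, then `x ∈ 4t·P_J`. -/
lemma mem_suppressed_aux {n p q : ℕ} (hp : 1 ≤ p) (r : ℕ) (hr1 : 1 ≤ r)
    (y : Fin p → EuclideanSpace ℝ (Fin n)) (z : Fin q → EuclideanSpace ℝ (Fin n))
    (t : ℝ) (x : EuclideanSpace ℝ (Fin n))
    (c : Fin p ⊕ Fin q → ℝ) (hc : ∑ i, |c i| ≤ 1)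
    (hx : x = t • ∑ i, c i • Sum.elim y z i)
    (J : Finset (Fin p))
    (hJ : ∑ i ∈ J, |c (Sum.inl i)| ≤ 2 * ((r:ℝ)/p) * ∑ i, |c (Sum.inl i)|) :
    x ∈ (4*t) • absConv Finset.univ
      (Sum.elim (fun i => if i ∈ J then ((r:ℝ)/(p:ℝ)) • y i else y i) z) := by
  have hp' : (0:ℝ) < p := by exact_mod_cast hp
  have hr' : (0:ℝ) < r := by exact_mod_cast hr1
  set c' : Fin p ⊕ Fin q → ℝ :=
    Sum.elim (fun i => if i ∈ J then (p:ℝ)/(r:ℝ) * c (Sum.inl i) / 4 else c (Sum.inl i) / 4)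
      (fun j => c (Sum.inr j) / 4) with hc'
  set Sa : ℝ := ∑ i, |c (Sum.inl i)| with hSa
  set Sb : ℝ := ∑ j, |c (Sum.inr j)| with hSb
  have hSa0 : 0 ≤ Sa := Finset.sum_nonneg fun i _ => abs_nonneg _
  have hSb0 : 0 ≤ Sb := Finset.sum_nonneg fun i _ => abs_nonneg _
  have hSab : Sa + Sb ≤ 1 := by
    rw [hSa, hSb]; rw [Fintype.sum_sum_type] at hc; exact hc
  refine Set.mem_smul_set.mpr ⟨∑ i, c' i • Sum.elim
      (fun i => if i ∈ J then ((r:ℝ)/(p:ℝ)) • y i else y i) z i, ⟨c', ?_, rfl⟩, ?_⟩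
  · rw [Fintype.sum_sum_type]
    have h1 : ∑ i : Fin p, |c' (Sum.inl i)|
        = ∑ i ∈ J, |(p:ℝ)/(r:ℝ) * c (Sum.inl i) / 4|
          + ∑ i ∈ Finset.univ.filter (fun i => i ∉ J), |c (Sum.inl i) / 4| := by
      simp only [hc', Sum.elim_inl, apply_ite abs]
      rw [Finset.sum_ite, Finset.filter_mem_eq_inter, Finset.univ_inter]
    have h2 : ∑ i ∈ J, |(p:ℝ)/(r:ℝ) * c (Sum.inl i) / 4|
        = (p:ℝ)/(r:ℝ)/4 * ∑ i ∈ J, |c (Sum.inl i)| := by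
      rw [Finset.mul_sum]
      refine Finset.sum_congr rfl fun i _ => ?_
      rw [abs_div, abs_mul, abs_div]
      rw [abs_of_pos hp', abs_of_pos hr', abs_of_pos (by norm_num : (0:ℝ) < 4)]
      ring
    have h3 : ∑ i ∈ Finset.univ.filter (fun i => i ∉ J), |c (Sum.inl i) / 4|
        ≤ Sa / 4 := by
      rw [hSa]
      have : ∀ i, |c (Sum.inl i) / 4| = |c (Sum.inl i)| / 4 := fun i => by
        rw [abs_div, abs_of_pos (by norm_num : (0:ℝ) < 4)]
      simp only [this]
      rw [← Finset.sum_div]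
      apply div_le_div_of_nonneg_right _ (by norm_num)
      · exact Finset.sum_le_sum_of_subset_of_nonneg (Finset.filter_subset _ _)
          fun i _ _ => abs_nonneg _
    have h4 : ∑ j : Fin q, |c' (Sum.inr j)| = Sb / 4 := by
      have habs : ∀ j : Fin q, |c (Sum.inr j) / 4| = |c (Sum.inr j)| / 4 := fun j => by
        rw [abs_div, abs_of_pos (by norm_num : (0:ℝ) < 4)]
      simp only [hc', Sum.elim_inr, habs, hSb, ← Finset.sum_div]
    have h5 : (p:ℝ)/(r:ℝ)/4 * ∑ i ∈ J, |c (Sum.inl i)|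
        ≤ (p:ℝ)/(r:ℝ)/4 * (2 * ((r:ℝ)/p) * Sa) := by
      apply mul_le_mul_of_nonneg_left hJ
      positivity
    have h6 : (p:ℝ)/(r:ℝ)/4 * (2 * ((r:ℝ)/p) * Sa) = Sa / 2 := by
      field_simp; ring
    calc ∑ i : Fin p, |c' (Sum.inl i)| + ∑ j : Fin q, |c' (Sum.inr j)|
        ≤ (Sa/2 + Sa/4) + Sb/4 := by
          rw [h1, h2, h4]; have := h5.trans_eq h6; linarith
      _ ≤ 1 := by linarith
  · rw [hx, Finset.smul_sum, Finset.smul_sum]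
    refine Finset.sum_congr rfl fun i _ => ?_
    rcases i with i | j
    · simp only [hc', Sum.elim_inl]
      by_cases hi : i ∈ J
      · simp only [hi, if_true, smul_smul]
        congr 1
        field_simp
      · simp only [hi, if_false, smul_smul]
        congr 1
        ring
    · simp only [hc', Sum.elim_inr, smul_smul]
      congr 1
      ring

/-- random suppression: the Gaussian measure of `t·P` is at most twice the
average, over subsets `J ⊆ [p]` with `|J| = r`, of the Gaussian measures of the suppressed
polytopes `4t·P_J`. -/
theorem random_suppression (n p q : ℕ) (hp : 1 ≤ p) (hpq : p + q = n)
    (y : Fin p → EuclideanSpace ℝ (Fin n)) (z : Fin q → EuclideanSpace ℝ (Fin n))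
    (hLI : LinearIndependent ℝ (Sum.elim y z))
    (r : ℕ) (hr1 : 1 ≤ r) (hrp : r ≤ p) (t : ℝ) (ht : 0 < t) :
    stdGaussian n (t • absConv Finset.univ (Sum.elim y z)) ≤
      (2 / (p.choose r : ℝ≥0∞)) *
        ∑ J ∈ Finset.powersetCard r (Finset.univ : Finset (Fin p)),
          stdGaussian n ((4 * t) •
            absConv Finset.univ
              (Sum.elim (fun i => if i ∈ J then ((r : ℝ) / (p : ℝ)) • y i else y i) z)) := by
  classical
  set μ := stdGaussian n with hμ
  set P := Finset.powersetCard r (Finset.univ : Finset (Fin p)) with hPdef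
  set T : Finset (Fin p) → Set (EuclideanSpace ℝ (Fin n)) := fun J =>
    (4 * t) • absConv Finset.univ
      (Sum.elim (fun i => if i ∈ J then ((r : ℝ) / (p : ℝ)) • y i else y i) z) with hT
  set hull : Finset (Fin p) → Set (EuclideanSpace ℝ (Fin n)) := fun J =>
    toMeasurable μ (T J) with hhull
  have hhullmeas : ∀ J, MeasurableSet (hull J) := fun J => measurableSet_toMeasurable μ _
  set g : EuclideanSpace ℝ (Fin n) → ℝ≥0∞ := fun x =>
    ∑ J ∈ P, (hull J).indicator (1 : EuclideanSpace ℝ (Fin n) → ℝ≥0∞) x with hg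
  have hgmeas : Measurable g := by
    apply Finset.measurable_sum
    intro J _
    exact measurable_const.indicator (hhullmeas J)
  set A : Set (EuclideanSpace ℝ (Fin n)) :=
    {x | ((p.choose r : ℕ) : ℝ≥0∞) ≤ 2 * g x} with hA
  have hAmeas : MeasurableSet A := measurableSet_le measurable_const (hgmeas.const_mul 2)
  have hC0 : ((p.choose r : ℕ) : ℝ≥0∞) ≠ 0 := by
    simp only [ne_eq, Nat.cast_eq_zero]
    exact (Nat.choose_pos hrp).ne'
  -- S ⊆ A
  have hSA : t • absConv Finset.univ (Sum.elim y z) ⊆ A := by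
    intro x hx
    obtain ⟨u, ⟨c, hc, hu⟩, hxu⟩ := Set.mem_smul_set.mp hx
    have hx' : x = t • ∑ i, c i • Sum.elim y z i := by rw [← hxu, hu]
    set G := P.filter (fun J => ∑ i ∈ J, |c (Sum.inl i)| ≤
      2 * ((r:ℝ) / p) * ∑ i, |c (Sum.inl i)|) with hG
    have hGcard : p.choose r ≤ 2 * G.card :=
      good_count_aux p r hp hr1 hrp (fun i => c (Sum.inl i))
    have hxT : ∀ J ∈ G, x ∈ hull J := by
      intro J hJ
      simp only [hG, Finset.mem_filter] at hJ
      exact subset_toMeasurable μ _ (mem_suppressed_aux hp r hr1 y z t x c hc hx' J hJ.2)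
    have hglb : (G.card : ℝ≥0∞) ≤ g x := by
      calc (G.card : ℝ≥0∞) = ∑ J ∈ G, (hull J).indicator
            (1 : EuclideanSpace ℝ (Fin n) → ℝ≥0∞) x := by
            rw [Finset.sum_congr rfl (fun J hJ => Set.indicator_of_mem (hxT J hJ)
              (1 : EuclideanSpace ℝ (Fin n) → ℝ≥0∞))]
            simp
        _ ≤ g x := Finset.sum_le_sum_of_subset (by rw [hG]; exact Finset.filter_subset _ _)
    show ((p.choose r : ℕ) : ℝ≥0∞) ≤ 2 * g x
    calc ((p.choose r : ℕ) : ℝ≥0∞) ≤ ((2 * G.card : ℕ) : ℝ≥0∞) := by exact_mod_cast hGcard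
      _ = 2 * (G.card : ℝ≥0∞) := by push_cast; ring
      _ ≤ 2 * g x := by exact mul_le_mul_right hglb 2
  -- main chain
  have hmain : ((p.choose r : ℕ) : ℝ≥0∞) * μ (t • absConv Finset.univ (Sum.elim y z))
      ≤ 2 * ∑ J ∈ P, μ (T J) := by
    calc ((p.choose r : ℕ) : ℝ≥0∞) * μ (t • absConv Finset.univ (Sum.elim y z))
        ≤ ((p.choose r : ℕ) : ℝ≥0∞) * μ A := by
          exact mul_le_mul_right (measure_mono hSA) _
      _ = ∫⁻ _x in A, ((p.choose r : ℕ) : ℝ≥0∞) ∂μ := by rw [setLIntegral_const]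
      _ ≤ ∫⁻ x in A, 2 * g x ∂μ := by
          apply setLIntegral_mono (by exact (hgmeas.const_mul 2))
          intro x hx
          exact hx
      _ ≤ ∫⁻ x, 2 * g x ∂μ := setLIntegral_le_lintegral _ _
      _ = 2 * ∫⁻ x, g x ∂μ := lintegral_const_mul 2 hgmeas
      _ = 2 * ∑ J ∈ P, μ (T J) := by
          congr 1
          calc ∫⁻ x, g x ∂μ
              = ∑ J ∈ P, ∫⁻ x, (hull J).indicator (1 : EuclideanSpace ℝ (Fin n) → ℝ≥0∞) x ∂μ :=
                lintegral_finset_sum P (fun J _ => measurable_const.indicator (hhullmeas J))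
            _ = ∑ J ∈ P, μ (T J) := by
                refine Finset.sum_congr rfl fun J _ => ?_
                rw [lintegral_indicator_one (hhullmeas J)]
                exact measure_toMeasurable _
  rw [show (2 : ℝ≥0∞) / (p.choose r : ℝ≥0∞) * ∑ J ∈ P, μ (T J)
      = (2 * ∑ J ∈ P, μ (T J)) / ((p.choose r : ℕ) : ℝ≥0∞) from by
        rw [div_eq_mul_inv, div_eq_mul_inv]; push_cast; ring]
  rw [ENNReal.le_div_iff_mul_le (Or.inl hC0) (Or.inl (ENNReal.natCast_ne_top _))]
  rw [mul_comm]
  exact hmain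

end
end

section
/- Let H be a real Hilbert space and let x₁,…,xₙ ∈ H satisfy ‖xᵢ‖ ≤ L for all i. Fix integers 1 ≤ t ≤ k ≤ n and set r₀ := L/√t. For each I ⊆ [n] define Q_I := conv{±xᵢ : i ∈ I}. Then ⋃_{I ⊆ [n], |I| = k} Q_I ⊆ ⋃_{S ⊆ [n], |S| = t} ( Q_S + r₀·B_H ), where B_H is the closed unit ball of H and + denotes Minkowski sum. -/
open scoped Pointwise
open Finset RealInnerProductSpace

noncomputable section

section aux

variable {H : Type*} [NormedAddCommGroup H] [InnerProductSpace ℝ H]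

lemma weight_sum {n : ℕ} (p : Fin n → ℝ) (hp1 : ∑ i, p i = 1) :
    ∀ t : ℕ, ∑ f : Fin t → Fin n, ∏ j, p (f j) = 1 := by
  intro t
  induction t with
  | zero => simp
  | succ t ih =>
    have h := Equiv.sum_comp (Fin.consEquiv (fun _ : Fin (t+1) => Fin n))
      (fun f : Fin (t+1) → Fin n => ∏ j, p (f j))
    rw [← h, Fintype.sum_prod_type]
    simp only [Fin.consEquiv_apply, Fin.prod_univ_succ, Fin.cons_zero, Fin.cons_succ]
    rw [← hp1]
    rw [Finset.sum_congr rfl (fun i _ => ?_)]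
    rw [← Finset.mul_sum, ih, mul_one]

lemma variance_identity {n : ℕ} (p : Fin n → ℝ) (w : Fin n → H)
    (hp1 : ∑ i, p i = 1) (hw : ∑ i, p i • w i = 0) :
    ∀ t : ℕ, ∑ f : Fin t → Fin n, (∏ j, p (f j)) * ‖∑ j, w (f j)‖ ^ 2
      = t * ∑ i, p i * ‖w i‖ ^ 2 := by
  intro t
  induction t with
  | zero => simp
  | succ t ih =>
    have h := Equiv.sum_comp (Fin.consEquiv (fun _ : Fin (t+1) => Fin n))
      (fun f : Fin (t+1) → Fin n => (∏ j, p (f j)) * ‖∑ j, w (f j)‖ ^ 2)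
    rw [← h, Fintype.sum_prod_type]
    simp only [Fin.consEquiv_apply, Fin.prod_univ_succ, Fin.sum_univ_succ,
      Fin.cons_zero, Fin.cons_succ]
    have expand : ∀ (i : Fin n) (g : Fin t → Fin n),
        (p i * ∏ j, p (g j)) * ‖w i + ∑ j, w (g j)‖ ^ 2
        = p i * ((∏ j, p (g j)) * ‖w i‖ ^ 2)
          + (∏ j, p (g j)) * (2 * (p i * ⟪w i, (∑ j, w (g j))⟫))
          + p i * ((∏ j, p (g j)) * ‖∑ j, w (g j)‖ ^ 2) := by
      intro i g
      rw [@norm_add_sq_real]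
      ring
    rw [Finset.sum_congr rfl fun i _ => Finset.sum_congr rfl fun g _ => expand i g]
    simp only [Finset.sum_add_distrib]
    have t1 : ∑ i : Fin n, ∑ g : Fin t → Fin n, p i * ((∏ j, p (g j)) * ‖w i‖ ^ 2)
        = ∑ i, p i * ‖w i‖ ^ 2 := by
      refine Finset.sum_congr rfl fun i _ => ?_
      rw [← Finset.mul_sum, ← Finset.sum_mul, weight_sum p hp1, one_mul]
    have t2 : ∑ i : Fin n, ∑ g : Fin t → Fin n,
        (∏ j, p (g j)) * (2 * (p i * ⟪w i, (∑ j, w (g j))⟫)) = 0 := by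
      rw [Finset.sum_comm]
      refine Finset.sum_eq_zero fun g _ => ?_
      rw [← Finset.mul_sum]
      have : ∑ i : Fin n, 2 * (p i * ⟪w i, (∑ j, w (g j))⟫)
          = 2 * ⟪(∑ i : Fin n, p i • w i), (∑ j, w (g j))⟫ := by
        rw [sum_inner, Finset.mul_sum]
        refine Finset.sum_congr rfl fun i _ => ?_
        rw [real_inner_smul_left]
      rw [this, hw, inner_zero_left, mul_zero, mul_zero]
    have t3 : ∑ i : Fin n, ∑ g : Fin t → Fin n,
        p i * ((∏ j, p (g j)) * ‖∑ j, w (g j)‖ ^ 2)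
        = t * ∑ i, p i * ‖w i‖ ^ 2 := by
      have h1 : ∀ i : Fin n, ∑ g : Fin t → Fin n,
          p i * ((∏ j, p (g j)) * ‖∑ j, w (g j)‖ ^ 2)
          = p i * (t * ∑ i, p i * ‖w i‖ ^ 2) := fun i => by
        rw [← Finset.mul_sum, ih]
      rw [Finset.sum_congr rfl fun i _ => h1 i, ← Finset.sum_mul, hp1, one_mul]
    rw [t1, t2, t3]
    push_cast
    ring


lemma exists_good {n : ℕ} {L : ℝ} (hL : 0 ≤ L) {t : ℕ} (ht : 1 ≤ t)
    (p : Fin n → ℝ) (hp0 : ∀ i, 0 ≤ p i) (hp1 : ∑ i, p i = 1)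
    (v : Fin n → H) (hv : ∀ i, ‖v i‖ ≤ L) {y : H} (hy : ∑ i, p i • v i = y) :
    ∃ f : Fin t → Fin n, ‖y - (t : ℝ)⁻¹ • ∑ j, v (f j)‖ ≤ L / Real.sqrt t := by
  have htR : (0:ℝ) < t := by exact_mod_cast ht
  set w : Fin n → H := fun i => v i - y with hwdef
  have hw : ∑ i, p i • w i = 0 := by
    simp only [hwdef, smul_sub, Finset.sum_sub_distrib, hy, ← Finset.sum_smul, hp1, one_smul,
      sub_self]
  set M : ℝ := ∑ i, p i * ‖w i‖ ^ 2 with hMdef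
  have hM : M ≤ L ^ 2 := by
    have e0 : ∀ i, ‖w i‖ ^ 2 = ‖v i‖ ^ 2 - 2 * ⟪v i, y⟫ + ‖y‖ ^ 2 := fun i =>
      norm_sub_sq_real (v i) y
    have e1 : M = ∑ i, p i * ‖v i‖ ^ 2 - 2 * ‖y‖ ^ 2 + ‖y‖ ^ 2 := by
      rw [hMdef, Finset.sum_congr rfl fun i _ => by rw [e0 i]]
      have e2 : ∑ i, p i * (‖v i‖ ^ 2 - 2 * ⟪v i, y⟫ + ‖y‖ ^ 2)
          = ∑ i, p i * ‖v i‖ ^ 2 - 2 * (∑ i, p i * ⟪v i, y⟫) + (∑ i, p i) * ‖y‖ ^ 2 := by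
        rw [Finset.mul_sum, Finset.sum_mul, ← Finset.sum_sub_distrib,
          ← Finset.sum_add_distrib]
        exact Finset.sum_congr rfl fun i _ => by ring
      have e3 : ∑ i, p i * ⟪v i, y⟫ = ‖y‖ ^ 2 := by
        have : ∑ i, p i * ⟪v i, y⟫ = ⟪(∑ i, p i • v i), y⟫ := by
          rw [sum_inner]
          exact Finset.sum_congr rfl fun i _ => (real_inner_smul_left (v i) y (p i)).symm
        rw [this, hy, real_inner_self_eq_norm_sq]
      rw [e2, e3, hp1, one_mul]
    have e4 : ∑ i, p i * ‖v i‖ ^ 2 ≤ L ^ 2 := by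
      calc ∑ i, p i * ‖v i‖ ^ 2 ≤ ∑ i, p i * L ^ 2 := by
            refine Finset.sum_le_sum fun i _ => ?_
            exact mul_le_mul_of_nonneg_left
              (pow_le_pow_left₀ (norm_nonneg _) (hv i) 2) (hp0 i)
        _ = L ^ 2 := by rw [← Finset.sum_mul, hp1, one_mul]
    nlinarith [sq_nonneg ‖y‖]
  set z : (Fin t → Fin n) → H := fun f => (t : ℝ)⁻¹ • ∑ j, v (f j) with hzdef
  have hnorm : ∀ f : Fin t → Fin n, ‖y - z f‖ ^ 2
      = (t:ℝ)⁻¹ ^ 2 * ‖∑ j, w (f j)‖ ^ 2 := by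
    intro f
    have hs : ∑ j, w (f j) = (∑ j, v (f j)) - (t : ℝ) • y := by
      simp only [hwdef, Finset.sum_sub_distrib, Finset.sum_const, Finset.card_univ,
        Fintype.card_fin, ← Nat.cast_smul_eq_nsmul ℝ]
    have : y - z f = -((t:ℝ)⁻¹ • ∑ j, w (f j)) := by
      rw [hs, smul_sub, smul_smul, inv_mul_cancel₀ (ne_of_gt htR), one_smul, hzdef]
      abel
    rw [this, norm_neg, norm_smul, mul_pow, Real.norm_eq_abs, sq_abs]
  have havg : ∑ f : Fin t → Fin n, (∏ j, p (f j)) * ‖y - z f‖ ^ 2 ≤ L ^ 2 / t := by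
    have : ∑ f : Fin t → Fin n, (∏ j, p (f j)) * ‖y - z f‖ ^ 2
        = (t:ℝ)⁻¹ ^ 2 * (t * M) := by
      rw [← variance_identity p w hp1 hw t, Finset.mul_sum]
      exact Finset.sum_congr rfl fun f _ => by rw [hnorm f]; ring
    rw [this]
    rw [div_eq_mul_inv]
    have : (t:ℝ)⁻¹ ^ 2 * (t * M) = M * (t:ℝ)⁻¹ := by
      field_simp
    rw [this]
    exact mul_le_mul_of_nonneg_right hM (by positivity)
  by_contra hcon
  push_neg at hcon
  obtain ⟨f₀, -, hf₀⟩ : ∃ f ∈ (Finset.univ : Finset (Fin t → Fin n)), (∏ j, p (f j)) ≠ 0 :=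
    Finset.exists_ne_zero_of_sum_ne_zero
      (by rw [weight_sum p hp1 t]; exact one_ne_zero)
  have hW0 : ∀ f : Fin t → Fin n, 0 ≤ ∏ j, p (f j) := fun f =>
    Finset.prod_nonneg fun j _ => hp0 (f j)
  have hWpos : 0 < ∏ j, p (f₀ j) := lt_of_le_of_ne (hW0 f₀) (Ne.symm hf₀)
  have hr0 : 0 ≤ L / Real.sqrt t := by positivity
  have hsq : ∀ f : Fin t → Fin n, L ^ 2 / t < ‖y - z f‖ ^ 2 := by
    intro f
    have h1 := pow_lt_pow_left₀ (hcon f) hr0 two_ne_zero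
    calc L ^ 2 / t = (L / Real.sqrt t) ^ 2 := by
          rw [div_pow, Real.sq_sqrt (le_of_lt htR)]
      _ < ‖y - z f‖ ^ 2 := h1
  have hlt : ∑ f : Fin t → Fin n, (∏ j, p (f j)) * (L ^ 2 / t)
      < ∑ f : Fin t → Fin n, (∏ j, p (f j)) * ‖y - z f‖ ^ 2 := by
    refine Finset.sum_lt_sum (fun f _ => ?_) ⟨f₀, Finset.mem_univ f₀, ?_⟩
    · exact mul_le_mul_of_nonneg_left (le_of_lt (hsq f)) (hW0 f)
    · exact mul_lt_mul_of_pos_left (hsq f₀) hWpos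
  rw [← Finset.sum_mul, weight_sum p hp1 t, one_mul] at hlt
  linarith

lemma pack {n t : ℕ} (x : Fin n → H) (L : ℝ) (hr : 0 ≤ L / Real.sqrt t)
    {y z : H} {S : Finset (Fin n)} (hS : S.card = t) (hz : z ∈ absConv S x)
    (hd : ‖y - z‖ ≤ L / Real.sqrt t) :
    y ∈ ⋃ (S : Finset (Fin n)) (_ : S.card = t),
        (absConv S x + (L / Real.sqrt t) • Metric.closedBall (0 : H) 1) := by
  rw [Set.mem_iUnion]
  refine ⟨S, ?_⟩
  rw [Set.mem_iUnion]
  refine ⟨hS, ?_⟩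
  have hball : (L / Real.sqrt t) • Metric.closedBall (0 : H) 1
      = Metric.closedBall (0 : H) (L / Real.sqrt t) := by
    rw [smul_closedBall _ _ zero_le_one, smul_zero, Real.norm_eq_abs,
      abs_of_nonneg hr, mul_one]
  rw [hball]
  have hb : y - z ∈ Metric.closedBall (0 : H) (L / Real.sqrt t) := by
    rw [Metric.mem_closedBall, dist_zero_right]; exact hd
  have := Set.add_mem_add hz hb
  simpa using this

end aux

/-- union inclusion after Maurey sparsification. -/
theorem maurey_union_inclusion {H : Type*} [NormedAddCommGroup H] [InnerProductSpace ℝ H]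
    [CompleteSpace H] (n : ℕ) (x : Fin n → H) (L : ℝ) (hx : ∀ i, ‖x i‖ ≤ L)
    (t k : ℕ) (ht : 1 ≤ t) (htk : t ≤ k) (hkn : k ≤ n) :
    (⋃ (I : Finset (Fin n)) (_ : I.card = k), absConv I x) ⊆
      ⋃ (S : Finset (Fin n)) (_ : S.card = t),
        (absConv S x + (L / Real.sqrt t) • Metric.closedBall (0 : H) 1) := by
  intro y hy
  rw [Set.mem_iUnion] at hy
  obtain ⟨I, hI⟩ := hy
  rw [Set.mem_iUnion] at hI
  obtain ⟨hIcard, a, ha1, hya⟩ := hI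
  have hn1 : 1 ≤ n := le_trans ht (le_trans htk hkn)
  have htn : t ≤ n := le_trans htk hkn
  have hL : 0 ≤ L := le_trans (norm_nonneg _) (hx ⟨0, hn1⟩)
  have htR : (0:ℝ) < t := by exact_mod_cast ht
  have hr : 0 ≤ L / Real.sqrt t := by positivity
  classical
  set a' : Fin n → ℝ := fun i => if i ∈ I then a i else 0 with ha'
  have hy' : y = ∑ i, a' i • x i := by
    rw [hya, ← Finset.sum_subset (Finset.subset_univ I)
      (fun i _ hi => by simp [ha', hi])]
    exact Finset.sum_congr rfl fun i hi => by simp [ha', hi]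
  set s : ℝ := ∑ i, |a' i| with hsdef
  have hs0 : 0 ≤ s := Finset.sum_nonneg fun i _ => abs_nonneg _
  have hs1 : s ≤ 1 := by
    have : s = ∑ i ∈ I, |a i| := by
      rw [hsdef, ← Finset.sum_subset (Finset.subset_univ I)
        (fun i _ hi => by simp [ha', hi])]
      exact Finset.sum_congr rfl fun i hi => by simp [ha', hi]
    rw [this]; exact ha1
  by_cases hs : s = 0
  · -- all coefficients vanish, y = 0
    have haz : ∀ i, a' i = 0 := by
      intro i
      have := (Finset.sum_eq_zero_iff_of_nonneg
        (fun i _ => abs_nonneg (a' i))).1 (hsdef ▸ hs) i (Finset.mem_univ i)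
      exact abs_eq_zero.1 this
    have hy0 : y = 0 := by
      rw [hy']; exact Finset.sum_eq_zero fun i _ => by rw [haz i, zero_smul]
    obtain ⟨S, -, hScard⟩ := Finset.exists_subset_card_eq
      (show t ≤ (Finset.univ : Finset (Fin n)).card by simpa using htn)
    have h0mem : (0:H) ∈ absConv S x := ⟨fun _ => 0, by simp, by simp⟩
    refine pack x L hr hScard h0mem ?_
    rw [hy0]; simpa using hr
  · have hspos : 0 < s := lt_of_le_of_ne hs0 (Ne.symm hs)
    set p : Fin n → ℝ := fun i => |a' i| / s with hp
    have hp0 : ∀ i, 0 ≤ p i := fun i => by positivity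
    have hp1 : ∑ i, p i = 1 := by
      rw [hp]; rw [← Finset.sum_div, ← hsdef, div_self hs]
    set b : Fin n → ℝ := fun i => if a' i = 0 then 0 else s * a' i / |a' i| with hbdef
    have hb : ∀ i, |b i| ≤ s := by
      intro i
      rw [hbdef]
      by_cases h : a' i = 0
      · simp [h, hs0]
      · simp only [h, if_false]
        rw [abs_div, abs_mul, abs_abs, abs_of_nonneg hs0,
          mul_div_assoc, div_self (abs_ne_zero.2 h), mul_one]
    set v : Fin n → H := fun i => b i • x i with hv
    have hvL : ∀ i, ‖v i‖ ≤ L := by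
      intro i
      rw [hv]
      calc ‖b i • x i‖ = |b i| * ‖x i‖ := by rw [norm_smul, Real.norm_eq_abs]
        _ ≤ 1 * L := by
            refine mul_le_mul (le_trans (hb i) hs1) (hx i) (norm_nonneg _) zero_le_one
        _ = L := one_mul L
    have hpv : ∀ i, p i • v i = a' i • x i := by
      intro i
      rw [hv, hp, hbdef, smul_smul]
      by_cases h : a' i = 0
      · simp [h]
      · simp only [h, if_false]
        congr 1
        field_simp
    have hyv : ∑ i, p i • v i = y := by
      rw [Finset.sum_congr rfl fun i _ => hpv i, ← hy']
    obtain ⟨f, hf⟩ := exists_good hL ht p hp0 hp1 v hvL hyv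
    obtain ⟨S, hSsub, -, hScard⟩ := Finset.exists_subsuperset_card_eq
      (Finset.subset_univ (Finset.image f Finset.univ))
      (le_trans Finset.card_image_le (le_of_eq (by simp)))
      (show t ≤ (Finset.univ : Finset (Fin n)).card by simpa using htn)
    have hfS : ∀ j, f j ∈ S := fun j =>
      hSsub (Finset.mem_image_of_mem f (Finset.mem_univ j))
    set c : Fin n → ℝ := fun i => (t:ℝ)⁻¹ * ∑ j, (if i = f j then b i else 0) with hc
    have hzmem : (t:ℝ)⁻¹ • (∑ j, v (f j)) ∈ absConv S x := by
      refine ⟨c, ?_, ?_⟩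
      · have hci : ∀ i, |c i| ≤ (t:ℝ)⁻¹ * ∑ j, (if i = f j then (1:ℝ) else 0) := by
          intro i
          simp only [hc]
          rw [abs_mul, abs_of_nonneg (by positivity : (0:ℝ) ≤ (t:ℝ)⁻¹)]
          refine mul_le_mul_of_nonneg_left ?_ (by positivity)
          refine le_trans (Finset.abs_sum_le_sum_abs _ _)
            (Finset.sum_le_sum fun j _ => ?_)
          by_cases h : i = f j
          · simp only [h, if_true]
            exact le_trans (hb _) hs1
          · simp [h]
        calc ∑ i ∈ S, |c i|
            ≤ ∑ i ∈ S, (t:ℝ)⁻¹ * ∑ j, (if i = f j then (1:ℝ) else 0) :=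
              Finset.sum_le_sum fun i _ => hci i
          _ = (t:ℝ)⁻¹ * ∑ j : Fin t, ∑ i ∈ S, (if i = f j then (1:ℝ) else 0) := by
              rw [← Finset.mul_sum, Finset.sum_comm]
          _ = (t:ℝ)⁻¹ * t := by
              congr 1
              have h1 : ∀ j : Fin t, (∑ i ∈ S, if i = f j then (1:ℝ) else 0) = 1 := by
                intro j
                rw [Finset.sum_ite_eq' S (f j) (fun _ => (1:ℝ)), if_pos (hfS j)]
              rw [Finset.sum_congr rfl fun j _ => h1 j]
              simp
          _ = 1 := inv_mul_cancel₀ (ne_of_gt htR)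
      · have step : ∀ i ∈ S, c i • x i
            = (t:ℝ)⁻¹ • ∑ j, (if i = f j then b i • x i else (0:H)) := by
          intro i _
          simp only [hc]
          rw [mul_smul, Finset.sum_smul]
          congr 1
          refine Finset.sum_congr rfl fun j _ => ?_
          by_cases h : i = f j <;> simp [h]
        rw [Finset.sum_congr rfl step, ← Finset.smul_sum, Finset.sum_comm]
        congr 1
        refine Finset.sum_congr rfl fun j _ => ?_
        rw [Finset.sum_ite_eq' S (f j) (fun i => b i • x i), if_pos (hfS j)]
    exact pack x L hr hScard hzmem hf

end
end

section
/- Let H ⊆ ℝⁿ be a linear subspace with dim(H) ≥ k, and let Q ⊆ H be a compact set with dim(span(Q)) ≤ k. Then there exists a k-dimensional linear subspace H̃ with span(Q) ⊆ H̃ ⊆ H such that for every η ≥ 0: γ_H( Q + η·B₂^H ) ≤ γ_{H̃}( Q + η·B₂^{H̃} ). Here, for a subspace E ⊆ ℝⁿ, γ_E denotes the law of π_E(G) for G a standard Gaussian vector in ℝⁿ (π_E the orthogonal projection onto E), B₂^E := {h ∈ E : ‖h‖₂ ≤ 1}, and + denotes Minkowski sum. -/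
open MeasureTheory ProbabilityTheory
open scoped ENNReal NNReal Pointwise

noncomputable section

/-- For a subspace `E ⊆ ℝⁿ`, the law of the orthogonal projection onto `E` of a standard
Gaussian vector, regarded as a measure on the ambient space. -/
def gammaSub {n : ℕ} (E : Submodule ℝ (EuclideanSpace ℝ (Fin n))) :
    Measure (EuclideanSpace ℝ (Fin n)) :=
  (stdGaussian n).map fun x => ((E.orthogonalProjectionOnto x : E) : EuclideanSpace ℝ (Fin n))

/-- The closed unit ball of the subspace `E`, as a subset of the ambient space. -/
def subBall {n : ℕ} (E : Submodule ℝ (EuclideanSpace ℝ (Fin n))) :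
    Set (EuclideanSpace ℝ (Fin n)) :=
  {h | h ∈ E ∧ ‖h‖ ≤ 1}

open Module in
lemma aux_exists_intermediate {V : Type*} [AddCommGroup V] [Module ℝ V]
    [FiniteDimensional ℝ V] (j : ℕ) :
    ∀ (N P : Submodule ℝ V), N ≤ P → finrank ℝ N + j = finrank ℝ P →
      ∀ k, finrank ℝ N ≤ k → k ≤ finrank ℝ P →
      ∃ W : Submodule ℝ V, N ≤ W ∧ W ≤ P ∧ finrank ℝ W = k := by
  induction j with
  | zero =>
    intro N P hNP h k hk1 hk2
    exact ⟨N, le_rfl, hNP, le_antisymm hk1 (by omega)⟩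
  | succ j ih =>
    intro N P hNP h k hk1 hk2
    rcases eq_or_lt_of_le hk1 with he | hlt
    · exact ⟨N, le_rfl, hNP, he⟩
    · have hNP' : finrank ℝ N < finrank ℝ P := by omega
      have : ¬ (P ≤ N) := fun hPN => by
        have := Submodule.finrank_mono (R := ℝ) hPN  -- maybe wrong name
        omega
      obtain ⟨x, hxP, hxN⟩ := SetLike.not_le_iff_exists.mp this
      have hx0 : x ≠ 0 := fun h0 => hxN (h0 ▸ N.zero_mem)
      have hinf : N ⊓ Submodule.span ℝ {x} = ⊥ := by
        rw [eq_bot_iff]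
        rintro y ⟨hyN, hy⟩
        rcases Submodule.mem_span_singleton.mp hy with ⟨r, rfl⟩
        rcases eq_or_ne r 0 with rfl | hr
        · simp
        · exact absurd (by simpa [hr] using N.smul_mem r⁻¹ hyN) hxN
      have hfr : finrank ℝ ↥(N ⊔ Submodule.span ℝ {x}) = finrank ℝ N + 1 := by
        have := Submodule.finrank_sup_add_finrank_inf_eq N (Submodule.span ℝ {x})
        rw [hinf, finrank_span_singleton hx0] at this
        simpa using this
      obtain ⟨W, hW1, hW2, hW3⟩ := ih (N ⊔ Submodule.span ℝ {x}) P
        (sup_le hNP (Submodule.span_le.mpr (by simpa using hxP))) (by omega) k (by omega)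
        hk2
      exact ⟨W, le_sup_left.trans hW1, hW2, hW3⟩

lemma isCompact_subBall {n : ℕ} (E : Submodule ℝ (EuclideanSpace ℝ (Fin n))) :
    IsCompact (subBall E) := by
  have : subBall E = (E : Set (EuclideanSpace ℝ (Fin n))) ∩ Metric.closedBall 0 1 := by
    ext x; simp [subBall, Set.mem_setOf_eq]
  rw [this]
  exact (isCompact_closedBall (0 : EuclideanSpace ℝ (Fin n)) 1).inter_left (Submodule.closed_of_finiteDimensional E)

lemma measurable_proj {n : ℕ} (E : Submodule ℝ (EuclideanSpace ℝ (Fin n))) :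
    Measurable fun x => ((E.orthogonalProjectionOnto x : E) : EuclideanSpace ℝ (Fin n)) :=
  (continuous_subtype_val.comp (ContinuousLinearMap.continuous (E.orthogonalProjectionOnto))).measurable

/-- dimension reduction inside a subspace. -/
theorem dimension_reduction (n k : ℕ) (H : Submodule ℝ (EuclideanSpace ℝ (Fin n)))
    (hH : k ≤ Module.finrank ℝ H) (Q : Set (EuclideanSpace ℝ (Fin n)))
    (hQH : Q ⊆ (H : Set (EuclideanSpace ℝ (Fin n)))) (hQc : IsCompact Q)
    (hspan : Module.finrank ℝ (Submodule.span ℝ Q) ≤ k) :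
    ∃ Ht : Submodule ℝ (EuclideanSpace ℝ (Fin n)),
      Module.finrank ℝ Ht = k ∧ Submodule.span ℝ Q ≤ Ht ∧ Ht ≤ H ∧
      ∀ η : ℝ, 0 ≤ η →
        gammaSub H (Q + η • subBall H) ≤ gammaSub Ht (Q + η • subBall Ht) := by
  have hNH : Submodule.span ℝ Q ≤ H := Submodule.span_le.mpr hQH
  obtain ⟨j, hj⟩ : ∃ j, Module.finrank ℝ (Submodule.span ℝ Q) + j = Module.finrank ℝ H :=
    ⟨_, Nat.add_sub_cancel' (le_trans hspan hH)⟩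
  obtain ⟨W, hW1, hW2, hW3⟩ := aux_exists_intermediate j (Submodule.span ℝ Q) H hNH hj k hspan hH
  refine ⟨W, hW3, hW1, hW2, fun η hη => ?_⟩
  -- measurability of the two sets
  have hset : ∀ E : Submodule ℝ (EuclideanSpace ℝ (Fin n)),
      MeasurableSet (Q + η • subBall E) := fun E =>
    (hQc.add ((isCompact_subBall E).smul η)).isClosed.measurableSet
  rw [gammaSub, gammaSub, Measure.map_apply (measurable_proj H) (hset H),
    Measure.map_apply (measurable_proj W) (hset W)]
  apply measure_mono
  intro g hg
  obtain ⟨q, hq, b, hb, hsum⟩ := Set.mem_add.mp hg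
  obtain ⟨b0, hb0, rfl⟩ := hb
  have hqW : q ∈ W := hW1 (Submodule.subset_span hq)
  refine Set.mem_add.mpr ⟨q, hq, η • (((W.orthogonalProjectionOnto b0 : W) :
    EuclideanSpace ℝ (Fin n))), ⟨((W.orthogonalProjectionOnto b0 : W) : EuclideanSpace ℝ (Fin n)),
    ⟨SetLike.coe_mem _, ?_⟩, rfl⟩, ?_⟩
  · calc ‖((W.orthogonalProjectionOnto b0 : W) : EuclideanSpace ℝ (Fin n))‖
        = ‖(W.orthogonalProjectionOnto b0 : W)‖ := rfl
      _ ≤ ‖W.orthogonalProjectionOnto‖ * ‖b0‖ := (W.orthogonalProjectionOnto).le_opNorm b0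
      _ ≤ 1 * 1 := by
          exact mul_le_mul (Submodule.orthogonalProjectionOnto_norm_le W) hb0.2 (norm_nonneg _) zero_le_one
      _ = 1 := one_mul 1
  · -- π_W g = q + η • π_W b0
    have hPW : ((W.orthogonalProjectionOnto g : W) : EuclideanSpace ℝ (Fin n))
        = ((W.orthogonalProjectionOnto ((H.orthogonalProjectionOnto g : H) :
            EuclideanSpace ℝ (Fin n)) : W) : EuclideanSpace ℝ (Fin n)) := by
      exact congrArg Subtype.val (Submodule.orthogonalProjectionOnto_starProjection_of_le hW2 g).symm
    simp only at hsum
    show q + η • ((W.orthogonalProjectionOnto b0 : W) : EuclideanSpace ℝ (Fin n))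
        = ((W.orthogonalProjectionOnto g : W) : EuclideanSpace ℝ (Fin n))
    rw [hPW, ← hsum, map_add, _root_.map_smul, Submodule.coe_add, Submodule.coe_smul,
      (by exact W.starProjection_eq_self_iff.mpr hqW : ((W.orthogonalProjectionOnto q : W) : EuclideanSpace ℝ (Fin n)) = q)]

end
end

section
/- There is a universal constant C > 0 such that for every integer d ≥ 1, all vectors y₁,…,y_d ∈ ℝ^d with R := max_{i ≤ d} ‖yᵢ‖₂, and every ρ ≥ 1: γ_d( ρ·conv{±y₁,…,±y_d} ) ≤ ( C·ρ·R / d )^d. -/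
open MeasureTheory ProbabilityTheory
open scoped ENNReal NNReal Pointwise

noncomputable section

lemma my_pi_mono {ι : Type*} [Fintype ι] {α : ι → Type*} [∀ i, MeasurableSpace (α i)]
    {μ ν : ∀ i, Measure (α i)} (h : ∀ i, μ i ≤ ν i) : Measure.pi μ ≤ Measure.pi ν := by
  have hout : OuterMeasure.pi (fun i => (μ i).toOuterMeasure)
      ≤ OuterMeasure.pi (fun i => (ν i).toOuterMeasure) := by
    rw [OuterMeasure.le_pi]
    intro s _
    refine (OuterMeasure.pi_pi_le _ s).trans ?_
    exact Finset.prod_le_prod' fun i _ => Measure.le_iff'.1 (h i) (s i)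
  refine Measure.le_iff.2 fun s hs => ?_
  rw [Measure.pi_def, Measure.pi_def, toMeasure_apply _ _ hs, toMeasure_apply _ _ hs]
  exact hout s

lemma gauss_le_volume : gaussianReal 0 1 ≤ (volume : Measure ℝ) := by
  refine Measure.le_iff.2 fun s hs => ?_
  rw [gaussianReal_apply 0 one_ne_zero s]
  calc ∫⁻ x in s, gaussianPDF 0 1 x ≤ ∫⁻ _ in s, 1 := by
        refine lintegral_mono fun x => ?_
        unfold gaussianPDF
        refine ENNReal.ofReal_le_one.2 ?_
        unfold gaussianPDFReal
        have h1 : (Real.sqrt (2 * Real.pi * (1:ℝ≥0)))⁻¹ ≤ 1 := by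
          rw [inv_le_one_iff₀]
          right
          rw [show ((2:ℝ) * Real.pi * (1:ℝ≥0)) = 2 * Real.pi by norm_num]
          nlinarith [Real.sq_sqrt (by positivity : (0:ℝ) ≤ 2*Real.pi),
            Real.sqrt_nonneg (2*Real.pi), Real.pi_gt_three]
        have h2 : Real.exp (-(x - 0)^2 / (2 * (1:ℝ≥0))) ≤ 1 := by
          rw [Real.exp_le_one_iff]
          have h3 : (0:ℝ) ≤ (x-0)^2 := sq_nonneg _
          have h4 : ((2:ℝ) * (1:ℝ≥0)) = 2 := by norm_num
          rw [h4]
          nlinarith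
        nlinarith [Real.exp_pos (-(x - 0)^2 / (2 * (1:ℝ≥0))),
          inv_nonneg.2 (Real.sqrt_nonneg (2 * Real.pi * (1:ℝ≥0)))]
    _ = volume s := setLIntegral_one s

lemma stdGaussian_le_volume (d : ℕ) :
    stdGaussian d ≤ (volume : Measure (EuclideanSpace ℝ (Fin d))) := by
  unfold _root_.stdGaussian
  calc (Measure.pi fun _ : Fin d => gaussianReal 0 1).map
        (MeasurableEquiv.toLp 2 (Fin d → ℝ))
      ≤ (Measure.pi fun _ : Fin d => (volume : Measure ℝ)).map
        (MeasurableEquiv.toLp 2 (Fin d → ℝ)) :=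
        Measure.map_mono (my_pi_mono fun _ => gauss_le_volume)
          (MeasurableEquiv.toLp 2 (Fin d → ℝ)).measurable
    _ = volume := by
        rw [← MeasureTheory.volume_pi]
        exact ((EuclideanSpace.volume_preserving_symm_measurableEquiv_toLp (Fin d)).symm).map_eq

lemma vol_l1_ball (d : ℕ) (hd : 1 ≤ d) :
    (volume : Measure (EuclideanSpace ℝ (Fin d)))
        {x : EuclideanSpace ℝ (Fin d) | ∑ i, |x i| ≤ 1}
      = ENNReal.ofReal (2 ^ d / (d.factorial)) := by
  haveI : Nonempty (Fin d) := ⟨⟨0, hd⟩⟩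
  have hBmeas : MeasurableSet {x : EuclideanSpace ℝ (Fin d) | ∑ i, |x i| ≤ 1} := by
    refine measurableSet_le (Finset.measurable_sum _ fun i _ => ?_) measurable_const
    exact ((measurable_pi_apply i).comp (WithLp.measurable_ofLp 2 _)).abs
  have mp := (EuclideanSpace.volume_preserving_symm_measurableEquiv_toLp (Fin d)).symm
  have h1 := mp.measure_preimage hBmeas.nullMeasurableSet
  have hpre : (MeasurableEquiv.toLp 2 (Fin d → ℝ)).symm.symm ⁻¹'
      {x : EuclideanSpace ℝ (Fin d) | ∑ i, |x i| ≤ 1}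
      = {x : Fin d → ℝ | ∑ i, |x i| ≤ 1} := rfl
  rw [hpre] at h1
  rw [← h1]
  have h2 := MeasureTheory.volume_sum_rpow_le (ι := Fin d) (le_refl (1:ℝ)) 1
  have hset : {x : Fin d → ℝ | (∑ i, |x i| ^ (1:ℝ)) ^ (1/(1:ℝ)) ≤ 1}
      = {x : Fin d → ℝ | ∑ i, |x i| ≤ 1} := by
    simp [Real.rpow_one]
  rw [hset] at h2
  rw [h2]
  have hg2 : Real.Gamma (1/(1:ℝ) + 1) = 1 := by
    rw [show (1/(1:ℝ) + 1) = (1:ℕ) + 1 by norm_num, Real.Gamma_nat_eq_factorial]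
    simp
  have hgd : Real.Gamma ((Fintype.card (Fin d)) / (1:ℝ) + 1) = (d.factorial) := by
    rw [show ((Fintype.card (Fin d)) / (1:ℝ) + 1) = (d:ℕ) + 1 by simp,
      Real.Gamma_nat_eq_factorial]
  rw [hg2, hgd]
  simp

open Matrix in
lemma hadamard_lite {d : ℕ} (hd : 1 ≤ d) (y : Fin d → EuclideanSpace ℝ (Fin d)) {R : ℝ}
    (hR : 0 ≤ R) (h : ∀ i, ‖y i‖ ≤ R) :
    |(Matrix.of fun i j => y j i : Matrix (Fin d) (Fin d) ℝ).det| ≤ R ^ d := by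
  set M : Matrix (Fin d) (Fin d) ℝ := Matrix.of fun i j => y j i with hM
  set G : Matrix (Fin d) (Fin d) ℝ := Mᴴ * M with hGdef
  have hG : G.PosSemidef := Matrix.posSemidef_conjTranspose_mul_self M
  have hherm : G.IsHermitian := hG.1
  have hdiag : ∀ i, G i i ≤ R ^ 2 := by
    intro i
    have hGii : G i i = ∑ k, (y i k) ^ 2 := by
      simp [hGdef, Matrix.mul_apply, Matrix.conjTranspose_apply, hM, sq]
    have h1 : ‖y i‖ ^ 2 = ∑ k, (y i k) ^ 2 := by
      rw [EuclideanSpace.norm_eq, Real.sq_sqrt (by positivity)]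
      simp [Real.norm_eq_abs, sq_abs]
    rw [hGii, ← h1]
    exact pow_le_pow_left₀ (norm_nonneg _) (h i) 2
  have htrace : ∑ i, hherm.eigenvalues i = G.trace := by
    rw [hherm.trace_eq_sum_eigenvalues]
    simp
  have heignn : ∀ i, 0 ≤ hherm.eigenvalues i := hG.eigenvalues_nonneg
  have htraceB : G.trace ≤ d * R ^ 2 := by
    rw [Matrix.trace]
    calc ∑ i, G.diag i ≤ ∑ _i : Fin d, R ^ 2 := Finset.sum_le_sum fun i _ => hdiag i
      _ = d * R ^ 2 := by simp [Finset.sum_const]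
  have hdpos : (0:ℝ) < d := by exact_mod_cast hd
  have hamgm := Real.geom_mean_le_arith_mean_weighted Finset.univ
    (fun _ : Fin d => 1 / d) hherm.eigenvalues
    (fun i _ => by positivity) (by simp; field_simp) (fun i _ => heignn i)
  have hprod : ∏ i, hherm.eigenvalues i ^ ((1:ℝ) / d) = (G.det) ^ ((1:ℝ)/d) := by
    rw [hherm.det_eq_prod_eigenvalues]
    simp only [RCLike.ofReal_real_eq_id, id_eq]
    rw [Real.finset_prod_rpow _ _ (fun i _ => heignn i)]
  have hsum : ∑ i, (1/(d:ℝ)) * hherm.eigenvalues i ≤ R ^ 2 := by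
    rw [← Finset.mul_sum, htrace]
    calc (1/(d:ℝ)) * G.trace ≤ (1/(d:ℝ)) * (d * R^2) :=
        mul_le_mul_of_nonneg_left htraceB (by positivity)
      _ = R ^ 2 := by field_simp
  have hdetnn : 0 ≤ G.det := by
    rw [hherm.det_eq_prod_eigenvalues]
    simp only [RCLike.ofReal_real_eq_id, id_eq]
    exact Finset.prod_nonneg fun i _ => heignn i
  have hkey : G.det ≤ (R ^ 2) ^ d := by
    have h3 : G.det ^ ((1:ℝ)/d) ≤ R ^ 2 := by
      rw [← hprod]; exact hamgm.trans hsum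
    calc G.det = (G.det ^ ((1:ℝ)/d)) ^ (d:ℕ) := by
          rw [← Real.rpow_natCast (G.det ^ ((1:ℝ)/d)) d, ← Real.rpow_mul hdetnn]
          rw [one_div, inv_mul_cancel₀ (ne_of_gt hdpos), Real.rpow_one]
      _ ≤ (R ^ 2) ^ d := pow_le_pow_left₀ (Real.rpow_nonneg hdetnn _) h3 d
  have hdet2 : M.det ^ 2 = G.det := by
    rw [hGdef, Matrix.det_mul, Matrix.det_conjTranspose]
    simp [sq]
  have hfin : |M.det| ^ 2 ≤ (R ^ d) ^ 2 := by
    rw [sq_abs, hdet2]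
    calc G.det ≤ (R^2)^d := hkey
      _ = (R ^ d) ^ 2 := by ring
  exact (pow_le_pow_iff_left₀ (abs_nonneg _) (by positivity) two_ne_zero).1 hfin

/-- Gaussian measure of a cross-polytope:
`γ_d(ρ·conv{±y₁,…,±y_d}) ≤ (CρR/d)^d` where `R = max ‖yᵢ‖₂`. -/
theorem crosspolytope_measure_bound :
    ∃ C : ℝ, 0 < C ∧
      ∀ (d : ℕ), 1 ≤ d →
      ∀ (y : Fin d → EuclideanSpace ℝ (Fin d)) (R ρ : ℝ),
        (∀ i, ‖y i‖ ≤ R) → (∃ i, ‖y i‖ = R) → 1 ≤ ρ →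
      stdGaussian d (ρ • absConv Finset.univ y) ≤
        ENNReal.ofReal ((C * ρ * R / d) ^ d) := by
  refine ⟨2 * Real.exp 1, by positivity, ?_⟩
  intro d hd y R ρ hRy hRmax hρ
  obtain ⟨i₀, hi₀⟩ := hRmax
  have hR0 : 0 ≤ R := hi₀ ▸ norm_nonneg _
  have hρ0 : (0:ℝ) ≤ ρ := by linarith
  have hdpos : (0:ℝ) < d := by exact_mod_cast hd
  set B : Set (EuclideanSpace ℝ (Fin d)) := {x | ∑ i, |x i| ≤ 1} with hB
  let T : EuclideanSpace ℝ (Fin d) →ₗ[ℝ] EuclideanSpace ℝ (Fin d) :=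
    { toFun := fun a => ∑ i, a i • y i
      map_add' := fun a b => by
        simp only [PiLp.add_apply, add_smul]
        rw [Finset.sum_add_distrib]
      map_smul' := fun c a => by
        simp only [PiLp.smul_apply, smul_eq_mul, RingHom.id_apply, mul_smul]
        rw [Finset.smul_sum] }
  have hK : absConv Finset.univ y = T '' B := by
    ext z
    constructor
    · rintro ⟨a, ha1, ha2⟩
      exact ⟨WithLp.toLp 2 a, ha1, ha2.symm⟩
    · rintro ⟨a, ha1, rfl⟩
      exact ⟨a.ofLp, ha1, rfl⟩
  have hTb : ∀ j, T ((EuclideanSpace.basisFun (Fin d) ℝ).toBasis j) = y j := by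
    intro j
    have hb : ((EuclideanSpace.basisFun (Fin d) ℝ).toBasis j)
        = EuclideanSpace.single j 1 := by
      rw [OrthonormalBasis.coe_toBasis, EuclideanSpace.basisFun_apply]
    rw [hb]
    show ∑ i, (EuclideanSpace.single j (1:ℝ)) i • y i = y j
    rw [Finset.sum_eq_single j]
    · simp [EuclideanSpace.single_apply]
    · intro i _ hij
      simp [EuclideanSpace.single_apply, hij]
    · simp
  have hdetT : LinearMap.det T = (Matrix.of fun i j => y j i : Matrix (Fin d) (Fin d) ℝ).det := by
    rw [← LinearMap.det_toMatrix (EuclideanSpace.basisFun (Fin d) ℝ).toBasis T]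
    congr 1
    ext i j
    rw [LinearMap.toMatrix_apply, hTb j]
    rw [OrthonormalBasis.coe_toBasis_repr_apply, EuclideanSpace.basisFun_repr]
    rfl
  have hdet_le : |LinearMap.det T| ≤ R ^ d := by
    rw [hdetT]; exact hadamard_lite hd y hR0 hRy
  have hfacpos : (0:ℝ) < (d.factorial : ℝ) := by exact_mod_cast d.factorial_pos
  have harith : ρ ^ d * (R ^ d * (2 ^ d / (d.factorial : ℝ)))
      ≤ (2 * Real.exp 1 * ρ * R / d) ^ d := by
    have hdd : ((d:ℝ)) ^ d ≤ (Real.exp 1) ^ d * (d.factorial : ℝ) := by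
      have h1 : ((d:ℝ)) ^ d / (d.factorial : ℝ) ≤ Real.exp (d:ℝ) := by
        refine le_trans ?_ (Real.sum_le_exp_of_nonneg (by positivity) (d+1))
        exact Finset.single_le_sum (f := fun i => (d:ℝ) ^ i / (i.factorial : ℝ))
          (fun i _ => by positivity) (Finset.self_mem_range_succ d)
      have h3 : Real.exp (d:ℝ) = (Real.exp 1) ^ d := by
        rw [← Real.exp_nat_mul]; norm_num
      rw [div_le_iff₀ hfacpos, h3] at h1
      exact h1
    have hRHS : (2 * Real.exp 1 * ρ * R / d) ^ d
        = (2 ^ d * (Real.exp 1) ^ d * ρ ^ d * R ^ d) / (d:ℝ) ^ d := by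
      rw [div_pow, mul_pow, mul_pow, mul_pow]
    rw [hRHS]
    have hLHS : ρ ^ d * (R ^ d * (2 ^ d / (d.factorial : ℝ)))
        = (ρ ^ d * R ^ d * 2 ^ d) / (d.factorial : ℝ) := by ring
    rw [hLHS, div_le_div_iff₀ hfacpos (by positivity)]
    calc (ρ ^ d * R ^ d * 2 ^ d) * (d:ℝ) ^ d
        ≤ (ρ ^ d * R ^ d * 2 ^ d) * ((Real.exp 1) ^ d * (d.factorial : ℝ)) := by
          refine mul_le_mul_of_nonneg_left hdd (by positivity)
      _ = (2 ^ d * (Real.exp 1) ^ d * ρ ^ d * R ^ d) * (d.factorial : ℝ) := by ring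
  calc stdGaussian d (ρ • absConv Finset.univ y)
      ≤ volume (ρ • absConv Finset.univ y) :=
        Measure.le_iff'.1 (stdGaussian_le_volume d) _
    _ = ENNReal.ofReal (ρ ^ d) * volume (absConv Finset.univ y) := by
        rw [Measure.addHaar_smul_of_nonneg volume hρ0]
        simp [finrank_euclideanSpace_fin]
    _ = ENNReal.ofReal (ρ ^ d) * (ENNReal.ofReal |LinearMap.det T| * volume B) := by
        rw [hK, Measure.addHaar_image_linearMap]
    _ = ENNReal.ofReal (ρ ^ d) * (ENNReal.ofReal |LinearMap.det T|
          * ENNReal.ofReal (2 ^ d / (d.factorial : ℝ))) := by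
        rw [hB, vol_l1_ball d hd]
    _ ≤ ENNReal.ofReal (ρ ^ d) * (ENNReal.ofReal (R ^ d)
          * ENNReal.ofReal (2 ^ d / (d.factorial : ℝ))) :=
        mul_le_mul' le_rfl (mul_le_mul' (ENNReal.ofReal_le_ofReal hdet_le) le_rfl)
    _ = ENNReal.ofReal (ρ ^ d * (R ^ d * (2 ^ d / (d.factorial : ℝ)))) := by
        rw [← ENNReal.ofReal_mul (by positivity), ← ENNReal.ofReal_mul (by positivity)]
    _ ≤ ENNReal.ofReal ((2 * Real.exp 1 * ρ * R / d) ^ d) :=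
        ENNReal.ofReal_le_ofReal harith

end
end
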